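/- arXiv:1807.04791 — 10 statements merged into one kernel-verified Lean document; each statement's English description precedes it below -/
import Mathlib

section
/- The quotient of the bi-amalgamation A ⋈^{f,g} (J, J') by the ideal 0 × J' is isomorphic to the ring f(A) + J, and the quotient by J × 0 is isomorphic to g(A) + J'. -/
set_option maxHeartbeats 1000000 in
set_option synthInstance.maxHeartbeats 400000 in
private lemma biAmalg_quot_aux {R R' : Type*} [CommRing R] [CommRing R']
    (φ : R →+* R') (T : Subring R') (h : φ.range = T) :
    Nonempty ((R ⧸ RingHom.ker φ) ≃+* T) :=
  ⟨(RingHom.quotientKerEquivRange φ).trans (RingEquiv.subringCongr h)⟩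

set_option maxHeartbeats 1000000 in
set_option synthInstance.maxHeartbeats 400000 in
/-- `(A ⋈^{f,g} (J,J')) / (0 × J') ≅ f(A)+J` and
`(A ⋈^{f,g} (J,J')) / (J × 0) ≅ g(A)+J'`. -/
theorem biAmalgamation_quotients_iso
    {A B C : Type*} [CommRing A] [CommRing B] [CommRing C]
    (f : A →+* B) (g : A →+* C) (J : Ideal B) (J' : Ideal C)
    (hcomap : J.comap f = J'.comap g) :
    ∀ S : Subring (B × C),
      (S : Set (B × C)) =
        {x | ∃ a : A, ∃ j ∈ J, ∃ j' ∈ J', x = (f a + j, g a + j')} →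
      (∃ I₁ : Ideal S,
          (I₁ : Set S) = {x : S | ∃ j' ∈ J', (x : B × C) = (0, j')} ∧
          ∀ T₁ : Subring B,
            (T₁ : Set B) = {b | ∃ a : A, ∃ j ∈ J, b = f a + j} →
            Nonempty ((S ⧸ I₁) ≃+* T₁)) ∧
      (∃ I₂ : Ideal S,
          (I₂ : Set S) = {x : S | ∃ j ∈ J, (x : B × C) = (j, 0)} ∧
          ∀ T₂ : Subring C,
            (T₂ : Set C) = {c | ∃ a : A, ∃ j' ∈ J', c = g a + j'} →
            Nonempty ((S ⧸ I₂) ≃+* T₂)) := by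
  intro S hS
  have hmem : ∀ x : B × C, x ∈ S ↔
      ∃ a : A, ∃ j ∈ J, ∃ j' ∈ J', x = (f a + j, g a + j') := by
    intro x
    rw [← SetLike.mem_coe, hS]; rfl
  constructor
  · refine ⟨RingHom.ker ((RingHom.fst B C).comp (Subring.subtype S)), ?_, ?_⟩
    · ext x
      simp only [SetLike.mem_coe, RingHom.mem_ker, Set.mem_setOf_eq]
      constructor
      · intro hx0
        have h1 : (x : B × C).1 = 0 := hx0
        obtain ⟨a, j, hj, j', hj', hx⟩ := (hmem _).mp x.2
        have h1' : f a + j = 0 := by rw [hx] at h1; exact h1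
        have hfa : a ∈ J.comap f := by
          have hfa' : f a = -j := by linear_combination h1'
          simpa [Ideal.mem_comap, hfa'] using J.neg_mem hj
        have hga : g a ∈ J' := by rw [hcomap] at hfa; exact hfa
        refine ⟨g a + j', J'.add_mem hga hj', ?_⟩
        rw [hx]
        exact Prod.ext h1' rfl
      · rintro ⟨j', hj', hx⟩
        show (x : B × C).1 = 0
        rw [hx]
    · intro T₁ hT₁
      refine biAmalg_quot_aux _ _ ?_
      ext b
      rw [← SetLike.mem_coe (p := T₁), hT₁]
      simp only [RingHom.mem_range, Set.mem_setOf_eq]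
      constructor
      · rintro ⟨⟨x, hx⟩, rfl⟩
        obtain ⟨a, j, hj, j', hj', hxe⟩ := (hmem _).mp hx
        refine ⟨a, j, hj, ?_⟩
        show x.1 = f a + j
        rw [hxe]
      · rintro ⟨a, j, hj, rfl⟩
        exact ⟨⟨(f a + j, g a + 0),
          (hmem _).mpr ⟨a, j, hj, 0, J'.zero_mem, rfl⟩⟩, rfl⟩
  · refine ⟨RingHom.ker ((RingHom.snd B C).comp (Subring.subtype S)), ?_, ?_⟩
    · ext x
      simp only [SetLike.mem_coe, RingHom.mem_ker, Set.mem_setOf_eq]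
      constructor
      · intro hx0
        have h1 : (x : B × C).2 = 0 := hx0
        obtain ⟨a, j, hj, j', hj', hx⟩ := (hmem _).mp x.2
        have h1' : g a + j' = 0 := by rw [hx] at h1; exact h1
        have hga : a ∈ J'.comap g := by
          have hga' : g a = -j' := by linear_combination h1'
          simpa [Ideal.mem_comap, hga'] using J'.neg_mem hj'
        have hfa : f a ∈ J := by rw [← hcomap] at hga; exact hga
        refine ⟨f a + j, J.add_mem hfa hj, ?_⟩
        rw [hx]
        exact Prod.ext rfl h1'
      · rintro ⟨j, hj, hx⟩
        show (x : B × C).2 = 0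
        rw [hx]
    · intro T₂ hT₂
      refine biAmalg_quot_aux _ _ ?_
      ext c
      rw [← SetLike.mem_coe (p := T₂), hT₂]
      simp only [RingHom.mem_range, Set.mem_setOf_eq]
      constructor
      · rintro ⟨⟨x, hx⟩, rfl⟩
        obtain ⟨a, j, hj, j', hj', hxe⟩ := (hmem _).mp hx
        refine ⟨a, j', hj', ?_⟩
        show x.2 = g a + j'
        rw [hxe]
      · rintro ⟨a, j', hj', rfl⟩
        exact ⟨⟨(f a + 0, g a + j'),
          (hmem _).mpr ⟨a, 0, J.zero_mem, j', hj', rfl⟩⟩, rfl⟩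
end

section
/- Assume J × J' contains an element (j, j') with j regular in f(A)+J and j' regular in g(A)+J'. If the bi-amalgamation A ⋈^{f,g} (J, J') is a Gaussian ring, then f⁻¹(J) = A (so J = B, J' = C, A ⋈^{f,g}(J,J') = B × C) and B and C are Gaussian. -/
/-- The content ideal of a polynomial: the ideal generated by its coefficients. -/
noncomputable def contentIdeal {R : Type*} [CommRing R] (p : Polynomial R) : Ideal R :=
  Ideal.span (Set.range p.coeff)

/-- A commutative ring is Gaussian if `c(pq) = c(p)c(q)` for all polynomials. -/
def IsGaussianRing (R : Type*) [CommRing R] : Prop :=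
  ∀ p q : Polynomial R, contentIdeal (p * q) = contentIdeal p * contentIdeal q

lemma contentIdeal_map {R T : Type*} [CommRing R] [CommRing T] (φ : R →+* T)
    (p : Polynomial R) : contentIdeal (p.map φ) = (contentIdeal p).map φ := by
  unfold contentIdeal
  rw [Ideal.map_span]
  congr 1
  ext t
  simp only [Set.mem_range, Set.mem_image, Polynomial.coeff_map]
  constructor
  · rintro ⟨n, rfl⟩; exact ⟨p.coeff n, ⟨n, rfl⟩, rfl⟩
  · rintro ⟨r, ⟨n, rfl⟩, rfl⟩; exact ⟨n, rfl⟩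

lemma isGaussianRing_of_surjective {R T : Type*} [CommRing R] [CommRing T]
    (φ : R →+* T) (hφ : Function.Surjective φ) (hR : IsGaussianRing R) :
    IsGaussianRing T := by
  intro p q
  obtain ⟨p', rfl⟩ := Polynomial.map_surjective φ hφ p
  obtain ⟨q', rfl⟩ := Polynomial.map_surjective φ hφ q
  rw [← Polynomial.map_mul, contentIdeal_map, contentIdeal_map, contentIdeal_map,
    hR, Ideal.map_mul]

/-- if `J × J'` contains an element `(j, j')` with `j` regular in `f(A)+J` and
`j'` regular in `g(A)+J'`, and the bi-amalgamation is Gaussian, then `f⁻¹(J) = A`,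
`J = B`, `J' = C`, the bi-amalgamation is all of `B × C`, and `B`, `C` are Gaussian. -/
theorem biAmalgamation_gaussian_regular
    {A B C : Type*} [CommRing A] [CommRing B] [CommRing C]
    (f : A →+* B) (g : A →+* C) (J : Ideal B) (J' : Ideal C)
    (hcomap : J.comap f = J'.comap g)
    (hreg : ∃ j ∈ J, ∃ j' ∈ J',
      (∀ b : B, (∃ a : A, ∃ k ∈ J, b = f a + k) → j * b = 0 → b = 0) ∧
      (∀ c : C, (∃ a : A, ∃ k' ∈ J', c = g a + k') → j' * c = 0 → c = 0)) :
    ∀ S : Subring (B × C),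
      (S : Set (B × C)) =
        {x | ∃ a : A, ∃ j ∈ J, ∃ j' ∈ J', x = (f a + j, g a + j')} →
      IsGaussianRing S →
      J.comap f = ⊤ ∧ J = ⊤ ∧ J' = ⊤ ∧ S = ⊤ ∧
        IsGaussianRing B ∧ IsGaussianRing C := by
  obtain ⟨j, hj, j', hj', hregB, hregC⟩ := hreg
  intro S hS hG
  have memS : ∀ z : B × C, z ∈ S ↔ ∃ a : A, ∃ k ∈ J, ∃ k' ∈ J', z = (f a + k, g a + k') := by
    intro z
    constructor
    · intro h
      have : z ∈ (S : Set (B × C)) := h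
      rw [hS] at this
      exact this
    · intro h
      have : z ∈ ((S : Set (B × C))) := by rw [hS]; exact h
      exact this
  -- the key step : 1 ∈ J
  have hone : (1 : B) ∈ J := by
    have hxS : ((j, 0) : B × C) ∈ S := by
      rw [memS]; exact ⟨0, j, hj, 0, J'.zero_mem, by simp⟩
    have hyS : ((0, j') : B × C) ∈ S := by
      rw [memS]; exact ⟨0, 0, J.zero_mem, j', hj', by simp⟩
    set x : S := ⟨(j, 0), hxS⟩ with hxdef
    set y : S := ⟨(0, j'), hyS⟩ with hydef
    have hxy : x * y = 0 := by
      apply Subtype.ext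
      show ((j, 0) : B × C) * (0, j') = 0
      simp [Prod.ext_iff]
    set p : Polynomial S := Polynomial.C x + Polynomial.C y * Polynomial.X with hp
    set q : Polynomial S := Polynomial.C y + Polynomial.C x * Polynomial.X with hq
    have hCxy : (Polynomial.C x) * (Polynomial.C y) = 0 := by
      rw [← Polynomial.C_mul, hxy, Polynomial.C_0]
    have hpq : p * q = Polynomial.C (x * x + y * y) * Polynomial.X := by
      have expand : p * q = Polynomial.C x * Polynomial.C y * (1 + Polynomial.X ^ 2)
          + (Polynomial.C x * Polynomial.C x + Polynomial.C y * Polynomial.C y)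
            * Polynomial.X := by
        rw [hp, hq]; ring
      rw [expand, hCxy, Polynomial.C_add, Polynomial.C_mul, Polynomial.C_mul]
      ring
    -- x * x belongs to contentIdeal (p*q)
    have hxp : x ∈ contentIdeal p := by
      apply Ideal.subset_span
      refine ⟨0, ?_⟩
      rw [hp]
      simp only [Polynomial.coeff_add, Polynomial.coeff_C_zero, Polynomial.coeff_C_mul,
        Polynomial.coeff_X_zero, mul_zero, add_zero]
    have hxq : x ∈ contentIdeal q := by
      apply Ideal.subset_span
      refine ⟨1, ?_⟩
      rw [hq]
      simp only [Polynomial.coeff_add, Polynomial.coeff_C, Polynomial.coeff_C_mul,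
        Polynomial.coeff_X_one, mul_one, if_neg one_ne_zero, zero_add]
    have hxx : x * x ∈ contentIdeal (p * q) := by
      rw [hG p q]
      exact Ideal.mul_mem_mul hxp hxq
    -- contentIdeal (p*q) ⊆ span {x*x + y*y}
    have hle : contentIdeal (p * q) ≤ Ideal.span {x * x + y * y} := by
      rw [hpq]
      apply Ideal.span_le.2
      rintro _ ⟨n, rfl⟩
      match n with
      | 0 =>
        simp only [Polynomial.coeff_C_mul, Polynomial.coeff_X_zero, mul_zero]
        exact Ideal.zero_mem _
      | 1 =>
        simp only [Polynomial.coeff_C_mul, Polynomial.coeff_X_one, mul_one]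
        exact Ideal.subset_span rfl
      | (n+2) =>
        rw [Polynomial.coeff_C_mul, Polynomial.coeff_X, if_neg (by omega), mul_zero]
        exact Ideal.zero_mem _
    obtain ⟨s, hs⟩ := Ideal.mem_span_singleton'.1 (hle hxx)
    -- hs : s * (x*x + y*y) = x * x
    obtain ⟨a, k, hk, k', hk', hsval⟩ := (memS (s : B × C)).1 s.2
    have hs2 : ((s : B × C)) * ((j * j, j' * j') : B × C) = ((j * j, 0) : B × C) := by
      have h0 := congrArg (Subtype.val) hs
      rw [Subring.coe_mul, Subring.coe_mul, Subring.coe_add, Subring.coe_mul,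
        Subring.coe_mul] at h0
      rw [hxdef, hydef] at h0
      convert h0 using 2 <;> simp [Prod.ext_iff]
    rw [hsval] at hs2
    rw [Prod.ext_iff] at hs2
    have h1 : (f a + k) * (j * j) = j * j ∧ (g a + k') * (j' * j') = 0 := by
      constructor
      · simpa using hs2.1
      · simpa using hs2.2
    -- from the second coordinate: g a + k' = 0, hence f a ∈ J
    have hfa : f a ∈ J := by
      have e1 : j' * (j' * (g a + k')) = 0 := by
        linear_combination h1.2
      have e2 : j' * (g a + k') = 0 := by
        apply hregC
        · exact ⟨0, j' * (g a + k'),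
            Ideal.mul_mem_right _ J' hj', by simp⟩
        · exact e1
      have e3 : g a + k' = 0 := hregC _ ⟨a, k', hk', rfl⟩ e2
      have hg : g a ∈ J' := by
        have hg' : g a = -k' := by linear_combination e3
        rw [hg']; exact J'.neg_mem hk'
      have : a ∈ J'.comap g := hg
      rw [← hcomap] at this
      exact this
    -- from the first coordinate: f a + k = 1
    have hone' : f a + k = 1 := by
      have e1 : j * (j * (f a + k - 1)) = 0 := by
        linear_combination h1.1
      have e2 : j * (f a + k - 1) = 0 := by
        apply hregB
        · exact ⟨0, j * (f a + k - 1),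
            Ideal.mul_mem_right _ J hj, by simp⟩
        · exact e1
      have e3 : f a + k - 1 = 0 := by
        apply hregB _ _ e2
        exact ⟨a - 1, k, hk, by rw [map_sub, map_one]; ring⟩
      linear_combination e3
    rw [← hone']
    exact J.add_mem hfa hk
  have hJ : J = ⊤ := Ideal.eq_top_iff_one J |>.2 hone
  have hcomapT : J.comap f = ⊤ := by rw [hJ]; exact Ideal.comap_top
  have hJ' : J' = ⊤ := by
    rw [hcomapT] at hcomap
    refine Ideal.eq_top_iff_one J' |>.2 ?_
    have h1 : (1 : A) ∈ J'.comap g := by rw [← hcomap]; trivial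
    simpa using h1
  have hST : S = ⊤ := by
    rw [Subring.eq_top_iff']
    intro z
    rw [memS]
    exact ⟨0, z.1, by rw [hJ]; trivial, z.2, by rw [hJ']; trivial, by simp⟩
  refine ⟨hcomapT, hJ, hJ', hST, ?_, ?_⟩
  · apply isGaussianRing_of_surjective ((RingHom.fst B C).comp S.subtype) _ hG
    intro b
    exact ⟨⟨(b, 0), by rw [hST]; trivial⟩, rfl⟩
  · apply isGaussianRing_of_surjective ((RingHom.snd B C).comp S.subtype) _ hG
    intro c
    exact ⟨⟨(0, c), by rw [hST]; trivial⟩, rfl⟩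
end

section
/- Let A be a commutative ring and I a regular proper ideal of A (I contains a non-zero-divisor). Then the amalgamated duplication A ⋈ I := {(a, a+i) : a ∈ A, i ∈ I} is not a Prüfer ring. Equivalently: if A ⋈ I is Prüfer, then I = A. -/
/-- A commutative ring is Prüfer if every finitely generated regular ideal is invertible. -/
def IsPruferRing (R : Type*) [CommRing R] : Prop :=
  ∀ I : Ideal R, I.FG → (∃ r ∈ I, r ∈ nonZeroDivisors R) →
    IsUnit (I : FractionalIdeal (nonZeroDivisors R) (FractionRing R))

set_option synthInstance.maxHeartbeats 1000000
set_option maxHeartbeats 1000000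

/-- if `I` is a regular ideal of `A` and the amalgamated duplication
`A ⋈ I` is Prüfer, then `I = A`. -/
theorem duplication_prufer_imp_top
    {A : Type*} [CommRing A] (I : Ideal A)
    (hreg : ∃ r ∈ I, r ∈ nonZeroDivisors A) :
    ∀ S : Subring (A × A),
      (S : Set (A × A)) = {x | ∃ a : A, ∃ i ∈ I, x = (a, a + i)} →
      IsPruferRing S → I = ⊤ := by
  obtain ⟨r, hrI, hr⟩ := hreg
  intro S hS hP
  have hmem : ∀ x : A × A, x ∈ S ↔ ∃ a : A, ∃ i ∈ I, x = (a, a + i) := by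
    intro x
    rw [← SetLike.mem_coe, hS]
    rfl
  have huS : ((r, r) : A × A) ∈ S := (hmem _).2 ⟨r, 0, I.zero_mem, by simp⟩
  have hvS : ((0, r) : A × A) ∈ S := (hmem _).2 ⟨0, r, hrI, by simp⟩
  set u : S := ⟨(r, r), huS⟩ with hu_def
  set v : S := ⟨(0, r), hvS⟩ with hv_def
  -- u is a non-zero-divisor of S
  have hu : u ∈ nonZeroDivisors (S : Type _) := by
    refine mem_nonZeroDivisors_iff_right.2 fun s hs => ?_
    have hval : (s : A × A) * (r, r) = 0 := congrArg Subtype.val hs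
    have h1 : (s : A × A).1 * r = 0 := congrArg Prod.fst hval
    have h2 : (s : A × A).2 * r = 0 := congrArg Prod.snd hval
    have e1 : (s : A × A).1 = 0 := hr.2 _ h1
    have e2 : (s : A × A).2 = 0 := hr.2 _ h2
    exact Subtype.ext (Prod.ext e1 e2)
  set J : Ideal S := Ideal.span {u, v} with hJ_def
  have hfg : J.FG := Submodule.fg_span (Set.toFinite _)
  have hregJ : ∃ x ∈ J, x ∈ nonZeroDivisors (S : Type _) :=
    ⟨u, Ideal.subset_span (by simp), hu⟩
  have hJ := hP J hfg hregJ
  -- key algebraic identity: v * v = u * v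
  have hvv : v * v = u * v := by
    apply Subtype.ext
    show ((0, r) : A × A) * (0, r) = (r, r) * (0, r)
    simp
  -- hence J * J = span{u} * J
  have hins : J = Ideal.span {u} ⊔ Ideal.span {v} := by
    rw [hJ_def, Ideal.span_insert]
  have hvle : Ideal.span {v} ≤ J := Ideal.span_mono (by simp [hJ_def])
  have hle : Ideal.span {v} * J ≤ Ideal.span {u} * J := by
    conv_lhs => rw [hins, Ideal.mul_sup, Ideal.span_singleton_mul_span_singleton,
      Ideal.span_singleton_mul_span_singleton, hvv, mul_comm v u, sup_idem]
    calc Ideal.span {u * v} = Ideal.span {u} * Ideal.span {v} :=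
          (Ideal.span_singleton_mul_span_singleton _ _).symm
      _ ≤ Ideal.span {u} * J := Ideal.mul_mono_right hvle
  have hJJ : J * J = Ideal.span {u} * J := by
    nth_rewrite 1 [hins]
    rw [Ideal.sup_mul]
    exact sup_eq_left.2 hle
  -- pass to fractional ideals and cancel J
  have hfrac : (J : FractionalIdeal (nonZeroDivisors (S : Type _)) (FractionRing S)) *
      (J : FractionalIdeal (nonZeroDivisors (S : Type _)) (FractionRing S)) =
      (J : FractionalIdeal (nonZeroDivisors (S : Type _)) (FractionRing S)) *
      ((Ideal.span {u} : Ideal S) : FractionalIdeal (nonZeroDivisors (S : Type _)) (FractionRing S)) := by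
    rw [← FractionalIdeal.coeIdeal_mul, ← FractionalIdeal.coeIdeal_mul, hJJ, mul_comm]
  have hJu : (J : FractionalIdeal (nonZeroDivisors (S : Type _)) (FractionRing S)) =
      ((Ideal.span {u} : Ideal S) : FractionalIdeal (nonZeroDivisors (S : Type _)) (FractionRing S)) :=
    hJ.mul_left_cancel hfrac
  have hJeq : J = Ideal.span {u} :=
    FractionalIdeal.coeIdeal_injective' (le_refl (nonZeroDivisors (S : Type _))) hJu
  -- deduce 1 ∈ I
  have hvmem : v ∈ Ideal.span ({u} : Set S) := by
    rw [← hJeq]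
    exact Ideal.subset_span (by simp)
  obtain ⟨s, hsu⟩ := Ideal.mem_span_singleton'.1 hvmem
  obtain ⟨a, i, hiI, hsval⟩ := (hmem (s : A × A)).1 s.2
  have hval : (s : A × A) * (r, r) = (0, r) := congrArg Subtype.val hsu
  rw [hsval] at hval
  have h1 : a * r = 0 := congrArg Prod.fst hval
  have h2 : (a + i) * r = r := congrArg Prod.snd hval
  have ha : a = 0 := hr.2 _ h1
  rw [ha, zero_add] at h2
  have hi1 : i = 1 := by
    have h3 : (i - 1) * r = 0 := by rw [sub_mul, one_mul, h2, sub_self]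
    exact sub_eq_zero.1 (hr.2 _ h3)
  rw [Ideal.eq_top_iff_one]
  rw [← hi1]
  exact hiI
end

section
/- In a local Gaussian commutative ring R, for any two elements a, b one has (a,b)² = (a²) or (a,b)² = (b²); moreover if ab = 0 and (a,b)² = (a²), then b² = 0. -/
section BGAux

open Polynomial Ideal

variable {R : Type*} [CommRing R]

lemma BG.contentIdeal_quadratic (a b c : R) :
    _root_.contentIdeal (C a * X ^ 2 + C b * X + C c) = Ideal.span {a, b, c} := by
  unfold _root_.contentIdeal
  apply le_antisymm
  · rw [Ideal.span_le]
    rintro x ⟨n, rfl⟩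
    match n with
    | 0 => simpa using subset_span (by simp : c ∈ ({a, b, c} : Set R))
    | 1 => simpa using subset_span (by simp : b ∈ ({a, b, c} : Set R))
    | 2 => simpa using subset_span (by simp : a ∈ ({a, b, c} : Set R))
    | (n+3) => simpa [coeff_X_pow] using zero_mem (Ideal.span ({a, b, c} : Set R))
  · rw [Ideal.span_le]
    rintro x hx
    rcases hx with rfl | rfl | rfl
    · exact subset_span ⟨2, by simp⟩
    · exact subset_span ⟨1, by simp⟩
    · exact subset_span ⟨0, by simp⟩

lemma BG.contentIdeal_linear (a b : R) :
    _root_.contentIdeal (C a * X + C b) = Ideal.span {a, b} := by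
  unfold _root_.contentIdeal
  apply le_antisymm
  · rw [Ideal.span_le]
    rintro x ⟨n, rfl⟩
    match n with
    | 0 => simpa using subset_span (by simp : b ∈ ({a, b} : Set R))
    | 1 => simpa using subset_span (by simp : a ∈ ({a, b} : Set R))
    | (n+2) => simpa using zero_mem (Ideal.span ({a, b} : Set R))
  · rw [Ideal.span_le]
    rintro x hx
    rcases hx with rfl | rfl
    · exact subset_span ⟨1, by simp⟩
    · exact subset_span ⟨0, by simp⟩

/-- The key consequence of Gaussianity for linear polynomials:
`(a,b)·(c,d) = (ac, ad+bc, bd)`. -/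
lemma BG.master (hR : IsGaussianRing R) (a b c d : R) :
    Ideal.span {a, b} * Ideal.span {c, d}
      = Ideal.span {a * c, a * d + b * c, b * d} := by
  have h := hR (C a * X + C b) (C c * X + C d)
  have hpoly : (C a * X + C b) * (C c * X + C d)
      = C (a * c) * X ^ 2 + C (a * d + b * c) * X + C (b * d) := by
    simp only [C_mul, C_add]; ring
  rw [hpoly, BG.contentIdeal_linear, BG.contentIdeal_linear,
    BG.contentIdeal_quadratic] at h
  exact h.symm

lemma BG.mem_span_triple {x u v w : R} (h : x ∈ Ideal.span ({u, v, w} : Set R)) :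
    ∃ p q r : R, x = p * u + q * v + r * w := by
  rw [show ({u, v, w} : Set R) = insert u {v, w} from rfl, Ideal.mem_span_insert] at h
  obtain ⟨p, z, hz, hx⟩ := h
  obtain ⟨q, r, hz'⟩ := Ideal.mem_span_pair.1 hz
  exact ⟨p, q, r, by rw [hx, ← hz']; ring⟩

lemma BG.span_pair_of_dvd {x y : R} (h : x ∣ y) :
    Ideal.span ({x, y} : Set R) = Ideal.span {x} := by
  apply le_antisymm
  · rw [Ideal.span_le]
    rintro z (rfl | rfl)
    · exact subset_span rfl
    · exact Ideal.mem_span_singleton.2 h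
  · exact Ideal.span_mono (by simp)

/-- `(x,y)² = (x², y²)` in a Gaussian ring. -/
lemma BG.spanG1 (hR : IsGaussianRing R) (x y : R) :
    Ideal.span ({x, y} : Set R) ^ 2 = Ideal.span {x ^ 2, y ^ 2} := by
  have hneg : Ideal.span ({x, -y} : Set R) = Ideal.span {x, y} := by
    apply le_antisymm
    · rw [Ideal.span_le]
      rintro z (rfl | rfl)
      · exact subset_span (by simp)
      · exact Submodule.neg_mem _ (subset_span (by simp))
    · rw [Ideal.span_le]
      rintro z (rfl | rfl)
      · exact subset_span (by simp)
      · have hzz : z = -(-z) := by ring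
        rw [hzz]
        exact Submodule.neg_mem _ (subset_span (by simp))
  have h := BG.master hR x y x (-y)
  rw [hneg] at h
  rw [pow_two, h]
  apply le_antisymm
  · rw [Ideal.span_le]
    rintro z (rfl | rfl | rfl)
    · exact Ideal.mem_span_pair.2 ⟨1, 0, by ring⟩
    · exact Ideal.mem_span_pair.2 ⟨0, 0, by ring⟩
    · exact Ideal.mem_span_pair.2 ⟨0, -1, by ring⟩
  · rw [Ideal.span_le]
    rintro z (rfl | rfl)
    · exact subset_span (by left; ring_nf)
    · have h2 : (y ^ 2 : R) = -(y * -y) := by ring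
      rw [h2]
      exact Submodule.neg_mem _ (subset_span (by right; right; rfl))

variable [IsLocalRing R]

lemma BG.nonunit_mul {s : R} (k : R) (hs : ¬IsUnit s) : ¬IsUnit (s * k) :=
  fun h => hs (isUnit_of_mul_isUnit_left h)

lemma BG.unit_add_nonunit {d x : R} (hd : IsUnit d) (hx : ¬IsUnit x) : IsUnit (d + x) := by
  by_contra h
  apply absurd hd
  rw [← IsLocalRing.notMem_maximalIdeal] at *
  push_neg at *
  have hdx : d = (d + x) - x := by ring
  rw [hdx]
  exact Ideal.sub_mem _ h hx

lemma BG.unit_one_sub {x : R} (hx : ¬IsUnit x) : IsUnit (1 - x) :=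
  IsLocalRing.isUnit_one_sub_self_of_mem_nonunits x (mem_nonunits_iff.2 hx)

/-- From `L·x² = M·y²` with `L` or `M` a unit, conclude the dichotomy. -/
lemma BG.span_sq_cases (hR : IsGaussianRing R) {x y L M : R}
    (key : L * x ^ 2 = M * y ^ 2) (hLM : IsUnit L ∨ IsUnit M) :
    Ideal.span {x, y} ^ 2 = Ideal.span {x ^ 2} ∨
      Ideal.span {x, y} ^ 2 = Ideal.span {y ^ 2} := by
  rcases hLM with hL | hM
  · right
    obtain ⟨u, hu⟩ := hL
    have h2 : x ^ 2 = y ^ 2 * ((↑u⁻¹ : R) * M) := by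
      have h3 : (↑u : R) * x ^ 2 = M * y ^ 2 := by rw [hu]; exact key
      calc x ^ 2 = ↑u⁻¹ * (↑u * x ^ 2) := by rw [← mul_assoc, Units.inv_mul, one_mul]
      _ = ↑u⁻¹ * (M * y ^ 2) := by rw [h3]
      _ = y ^ 2 * (↑u⁻¹ * M) := by ring
    rw [BG.spanG1 hR, Ideal.span_pair_comm, BG.span_pair_of_dvd ⟨_, h2⟩]
  · left
    obtain ⟨u, hu⟩ := hM
    have h2 : y ^ 2 = x ^ 2 * ((↑u⁻¹ : R) * L) := by
      have h3 : (↑u : R) * y ^ 2 = L * x ^ 2 := by rw [hu]; exact key.symm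
      calc y ^ 2 = ↑u⁻¹ * (↑u * y ^ 2) := by rw [← mul_assoc, Units.inv_mul, one_mul]
      _ = ↑u⁻¹ * (L * x ^ 2) := by rw [h3]
      _ = x ^ 2 * (↑u⁻¹ * L) := by ring
    rw [BG.spanG1 hR, BG.span_pair_of_dvd ⟨_, h2⟩]

/-- The "S-argument": if `xy = r·x² + s·y²` with `s` a nonunit, the dichotomy holds. -/
lemma BG.lemS (hR : IsGaussianRing R) (x y r s : R)
    (h : x * y = r * x ^ 2 + s * y ^ 2) (hs : ¬IsUnit s) :
    Ideal.span {x, y} ^ 2 = Ideal.span {x ^ 2} ∨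
      Ideal.span {x, y} ^ 2 = Ideal.span {y ^ 2} := by
  have hm := BG.master hR x (y - r * x) (y - r * x) x
  have hpair : Ideal.span ({x, y - r * x} : Set R) = Ideal.span {x, y} := by
    rw [show y - r * x = y + x * (-r) from by ring, Ideal.span_pair_add_left_mul]
  rw [Ideal.span_pair_comm (x := y - r * x), hpair] at hm
  have hx2 : x ^ 2 ∈ Ideal.span ({x, y} : Set R) * Ideal.span ({x, y} : Set R) := by
    rw [show x ^ 2 = x * x from (sq x)]
    exact Ideal.mul_mem_mul (subset_span (by simp)) (subset_span (by simp))
  rw [hm] at hx2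
  obtain ⟨p, q, w, hrep⟩ := BG.mem_span_triple hx2
  have key : (1 - q * (1 - r ^ 2)) * x ^ 2
      = ((p + w) * s + q * (1 - 2 * r * s)) * y ^ 2 := by
    linear_combination hrep + ((p + w) - 2 * q * r) * h
  by_cases hq : IsUnit q
  · refine BG.span_sq_cases hR key (Or.inr ?_)
    have hM : (p + w) * s + q * (1 - 2 * r * s) = q + s * ((p + w) - 2 * q * r) := by ring
    rw [hM]
    exact BG.unit_add_nonunit hq (BG.nonunit_mul _ hs)
  · refine BG.span_sq_cases hR key (Or.inl ?_)
    exact BG.unit_one_sub (BG.nonunit_mul _ hq)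

end BGAux

open Polynomial Ideal in
/-- Bazzoni–Glaz: in a local Gaussian ring, `(a,b)² = (a²)` or `(b²)`;
and if `ab = 0` with `(a,b)² = (a²)`, then `b² = 0`. -/
theorem local_gaussian_two_generated
    {R : Type*} [CommRing R] [IsLocalRing R] (hR : IsGaussianRing R) (a b : R) :
    ((Ideal.span {a, b}) ^ 2 = Ideal.span {a ^ 2} ∨
      (Ideal.span {a, b}) ^ 2 = Ideal.span {b ^ 2}) ∧
    (a * b = 0 → (Ideal.span {a, b}) ^ 2 = Ideal.span {a ^ 2} → b ^ 2 = 0) := by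
  constructor
  · -- part 1
    have hab : a * b ∈ Ideal.span ({a ^ 2, b ^ 2} : Set R) := by
      rw [← BG.spanG1 hR, pow_two]
      exact Ideal.mul_mem_mul (subset_span (by simp)) (subset_span (by simp))
    obtain ⟨r, s, hrs⟩ := Ideal.mem_span_pair.1 hab
    -- hrs : r * a^2 + s * b^2 = a * b
    by_cases hs : IsUnit s
    · by_cases hr : IsUnit r
      · -- both units
        obtain ⟨ru, hru⟩ := hr
        obtain ⟨t, hrt, tu, htu'⟩ : ∃ t : R, r * t = s ∧ ∃ tu : Rˣ, (↑tu : R) = t :=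
          ⟨(↑ru⁻¹ : R) * s, by rw [← hru, Units.mul_inv_cancel_left],
            ((Units.isUnit ru⁻¹).mul hs).unit, ((Units.isUnit ru⁻¹).mul hs).unit_spec⟩
        have hspan2 : Ideal.span ({t * b, a} : Set R) = Ideal.span {a, b} := by
          apply le_antisymm
          · rw [Ideal.span_le]
            rintro z (rfl | rfl)
            · exact Ideal.mem_span_pair.2 ⟨0, t, by ring⟩
            · exact Ideal.mem_span_pair.2 ⟨1, 0, by ring⟩
          · rw [Ideal.span_le]
            rintro z (rfl | rfl)
            · exact Ideal.mem_span_pair.2 ⟨0, 1, by ring⟩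
            · exact Ideal.mem_span_pair.2 ⟨(↑tu⁻¹ : R), 0, by rw [← htu']; simp⟩
        have hm := BG.master hR a b (t * b) a
        rw [hspan2] at hm
        have hb2 : b ^ 2 ∈ Ideal.span ({a, b} : Set R) * Ideal.span ({a, b} : Set R) := by
          rw [show b ^ 2 = b * b from (sq b)]
          exact Ideal.mul_mem_mul (subset_span (by simp)) (subset_span (by simp))
        rw [hm] at hb2
        obtain ⟨p1, p2, p3, hrep⟩ := BG.mem_span_triple hb2
        obtain ⟨lam, hlam⟩ : ∃ lam : R, lam = (p1 * t + p3) * r + p2 := ⟨_, rfl⟩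
        have key : lam * a ^ 2 = (1 - lam * t) * b ^ 2 := by
          rw [hlam]
          linear_combination (-1 : R) * hrep - (p1 * t + p3) * hrs.symm
            + ((p1 * t + p3) * b ^ 2) * hrt
        by_cases hl : IsUnit lam
        · exact BG.span_sq_cases hR key (Or.inl hl)
        · exact BG.span_sq_cases hR key (Or.inr (BG.unit_one_sub (BG.nonunit_mul t hl)))
      · -- r nonunit : apply the S-argument with the roles of a,b swapped
        have h' : b * a = s * b ^ 2 + r * a ^ 2 := by linear_combination (-1 : R) * hrs
        have hd := BG.lemS hR b a s r h' hr
        rw [Ideal.span_pair_comm] at hd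
        exact hd.symm
    · exact BG.lemS hR a b r s (by linear_combination (-1 : R) * hrs) hs
  · -- part 2
    intro hab0 hIa
    have hb2 : b ^ 2 ∈ (Ideal.span {a, b}) ^ 2 := by
      rw [pow_two, show b ^ 2 = b * b from (sq b)]
      exact Ideal.mul_mem_mul (subset_span (by simp)) (subset_span (by simp))
    rw [hIa, Ideal.mem_span_singleton] at hb2
    obtain ⟨t, ht⟩ := hb2
    -- ht : b ^ 2 = a ^ 2 * t
    have hm := BG.master hR a b b (-(a * t))
    have hbot : Ideal.span ({a * b, a * (-(a * t)) + b * b, b * (-(a * t))} : Set R) = ⊥ := by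
      rw [eq_bot_iff, Ideal.span_le]
      rintro z (rfl | rfl | rfl)
      · simp [hab0]
      · simp only [SetLike.mem_coe, Ideal.mem_bot]
        linear_combination ht
      · simp only [SetLike.mem_coe, Ideal.mem_bot]
        linear_combination (-t) * hab0
    have hz : b * b ∈ Ideal.span ({a, b} : Set R) * Ideal.span ({b, -(a * t)} : Set R) :=
      Ideal.mul_mem_mul (subset_span (by simp)) (subset_span (by simp))
    rw [hm, hbot, Ideal.mem_bot] at hz
    rw [sq]
    exact hz
end

section
/- Let (A, m) be a local ring, and suppose A, f(A)+J, and g(A)+J' are Gaussian, J² = 0, J'² = 0, J × J' ⊆ Jac(B × C), and for all a ∈ m one has f(a)J = f(a)²J and g(a)J' = g(a)²J'. Then the bi-amalgamation A ⋈^{f,g} (J, J') is Gaussian. -/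
namespace BiAmalg

open Polynomial hiding contentIdeal
open Ideal

variable {R : Type*} [CommRing R]

lemma coeff_mem_contentIdeal (p : R[X]) (n : ℕ) : p.coeff n ∈ contentIdeal p :=
  Ideal.subset_span ⟨n, rfl⟩

lemma contentIdeal_le_iff {p : R[X]} {I : Ideal R} :
    contentIdeal p ≤ I ↔ ∀ n, p.coeff n ∈ I := by
  constructor
  · intro h n; exact h (coeff_mem_contentIdeal p n)
  · intro h
    refine Ideal.span_le.mpr ?_
    rintro x ⟨n, rfl⟩; exact h n

lemma contentIdeal_zero : contentIdeal (0 : R[X]) = ⊥ := by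
  apply le_antisymm _ bot_le
  rw [contentIdeal_le_iff]; intro n; simp

lemma contentIdeal_fg (p : R[X]) : (contentIdeal p).FG := by
  classical
  refine ⟨insert 0 (p.support.image p.coeff), le_antisymm ?_ ?_⟩
  · refine Ideal.span_le.mpr ?_
    intro x hx
    simp only [Finset.coe_insert, Set.mem_insert_iff, Finset.coe_image] at hx
    rcases hx with rfl | ⟨n, _, rfl⟩
    · exact (Ideal.span _).zero_mem
    · exact coeff_mem_contentIdeal p n
  · rw [contentIdeal_le_iff]
    intro n
    by_cases hn : n ∈ p.support
    · refine Ideal.subset_span ?_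
      simp only [Finset.coe_insert, Set.mem_insert_iff, Finset.coe_image, Set.mem_image]
      exact Or.inr ⟨n, hn, rfl⟩
    · have : p.coeff n = 0 := Polynomial.notMem_support_iff.mp hn
      rw [this]; exact (Ideal.span _).zero_mem

lemma contentIdeal_mul_le (p q : R[X]) :
    contentIdeal (p * q) ≤ contentIdeal p * contentIdeal q := by
  rw [contentIdeal_le_iff]
  intro n
  rw [coeff_mul]
  exact Ideal.sum_mem _ fun c _ =>
    Ideal.mul_mem_mul (coeff_mem_contentIdeal p c.1) (coeff_mem_contentIdeal q c.2)

/-- "Lemma U": over a local ring, if `p` has an invertible coefficient then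
`c(q) ≤ c(pq)`. -/
lemma contentIdeal_le_of_isUnit_coeff [IsLocalRing R] {p : R[X]}
    (hp : ∃ i, IsUnit (p.coeff i)) (q : R[X]) :
    contentIdeal q ≤ contentIdeal (p * q) := by
  classical
  set i₀ := Nat.find hp with hi₀
  have hunit : IsUnit (p.coeff i₀) := Nat.find_spec hp
  have hmin : ∀ k < i₀, p.coeff k ∈ IsLocalRing.maximalIdeal R := by
    intro k hk
    exact Nat.find_min hp hk
  -- Nakayama setup
  set D : Ideal R := contentIdeal (p * q) ⊔ IsLocalRing.maximalIdeal R • contentIdeal q with hD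
  have key : ∀ j, q.coeff j ∈ D := by
    intro j
    induction j using Nat.strong_induction_on with
    | _ j ih =>
      have hc : (p * q).coeff (i₀ + j) ∈ D :=
        Submodule.mem_sup_left (coeff_mem_contentIdeal (p * q) (i₀ + j))
      have hmem : (i₀, j) ∈ Finset.HasAntidiagonal.antidiagonal (i₀ + j) := by
        simp [Finset.HasAntidiagonal.mem_antidiagonal]
      have hsum : (p * q).coeff (i₀ + j)
          = p.coeff i₀ * q.coeff j
            + ∑ x ∈ (Finset.HasAntidiagonal.antidiagonal (i₀ + j)).erase (i₀, j),
                p.coeff x.1 * q.coeff x.2 := by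
        rw [coeff_mul, ← Finset.add_sum_erase _ (fun x => p.coeff x.1 * q.coeff x.2) hmem]
      have hrest : ∀ x ∈ (Finset.HasAntidiagonal.antidiagonal (i₀ + j)).erase (i₀, j),
          p.coeff x.1 * q.coeff x.2 ∈ D := by
        rintro ⟨k, l⟩ hx
        have hne : (k, l) ≠ (i₀, j) := Finset.ne_of_mem_erase hx
        have hkl : k + l = i₀ + j := by
          have := Finset.mem_of_mem_erase hx
          simpa [Finset.HasAntidiagonal.mem_antidiagonal] using this
        rcases lt_trichotomy k i₀ with hk | hk | hk
        · -- p.coeff k ∈ m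
          have : p.coeff k * q.coeff l ∈ IsLocalRing.maximalIdeal R • contentIdeal q :=
            Submodule.smul_mem_smul (hmin k hk) (coeff_mem_contentIdeal q l)
          exact Submodule.mem_sup_right this
        · exfalso; apply hne; subst hk; have : l = j := by omega
          subst this; rfl
        · have hl : l < j := by omega
          exact Ideal.mul_mem_left _ _ (ih l hl)
      have hterm : p.coeff i₀ * q.coeff j ∈ D := by
        have hs : ∑ x ∈ (Finset.HasAntidiagonal.antidiagonal (i₀ + j)).erase (i₀, j),
            p.coeff x.1 * q.coeff x.2 ∈ D := Ideal.sum_mem _ hrest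
        have : p.coeff i₀ * q.coeff j = (p * q).coeff (i₀ + j)
            - ∑ x ∈ (Finset.HasAntidiagonal.antidiagonal (i₀ + j)).erase (i₀, j),
                p.coeff x.1 * q.coeff x.2 := by
          rw [hsum]; ring
        rw [this]; exact Ideal.sub_mem _ hc hs
      obtain ⟨u, hu⟩ := hunit
      have : q.coeff j = (↑u⁻¹ : R) * (p.coeff i₀ * q.coeff j) := by
        rw [← mul_assoc, ← hu, Units.inv_mul, one_mul]
      rw [this]
      exact Ideal.mul_mem_left _ _ hterm
  have hle : contentIdeal q ≤ contentIdeal (p * q) ⊔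
      IsLocalRing.maximalIdeal R • contentIdeal q := by
    rw [contentIdeal_le_iff]; exact key
  exact Submodule.le_of_le_smul_of_le_jacobson_bot (contentIdeal_fg q)
    (IsLocalRing.maximalIdeal_le_jacobson ⊥) hle

/-- H2 necessity: in a Gaussian ring, `ab = 0` and `b² ∈ (a²)` imply `b² = 0`. -/
lemma sq_eq_zero_of_gaussian (hG : IsGaussianRing R) {a b : R}
    (hab : a * b = 0) (hb2 : b ^ 2 ∈ Ideal.span {a ^ 2}) : b ^ 2 = 0 := by
  obtain ⟨β, hβ⟩ := Ideal.mem_span_singleton'.mp hb2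
  set f : R[X] := C a * X + C b with hf
  set g : R[X] := C b * X - C (β * a) with hg
  have key : f * g = C (a * b) * X ^ 2 + C (b ^ 2 - β * a ^ 2) * X - C (β * (a * b)) := by
    simp only [hf, hg, _root_.map_mul, _root_.map_sub, _root_.map_add, _root_.map_pow]
    ring
  have hfg : f * g = 0 := by
    rw [key, hab, hβ]
    simp
  have hb : b ^ 2 ∈ contentIdeal f * contentIdeal g := by
    have h1 : f.coeff 0 = b := by simp [hf]
    have h2 : g.coeff 1 = b := by simp [hg]
    have : b ^ 2 = f.coeff 0 * g.coeff 1 := by rw [h1, h2]; ring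
    rw [this]
    exact Ideal.mul_mem_mul (coeff_mem_contentIdeal f 0) (coeff_mem_contentIdeal g 1)
  rw [← hG, hfg, contentIdeal_zero] at hb
  exact hb


lemma span_singleton_trans {x y z : R}
    (h1 : x ∈ span ({y} : Set R)) (h2 : y ∈ span ({z} : Set R)) : x ∈ span ({z} : Set R) := by
  obtain ⟨c, hc⟩ := Ideal.mem_span_singleton'.mp h1
  obtain ⟨c', hc'⟩ := Ideal.mem_span_singleton'.mp h2
  exact Ideal.mem_span_singleton'.mpr ⟨c * c', by rw [← hc, ← hc']; ring⟩

lemma mem_span_of_unit_mul {v x y : R} (hv : IsUnit v)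
    (h : v * x ∈ span ({y} : Set R)) : x ∈ span ({y} : Set R) := by
  obtain ⟨u, rfl⟩ := hv
  obtain ⟨c, hc⟩ := Ideal.mem_span_singleton'.mp h
  refine Ideal.mem_span_singleton'.mpr ⟨(↑u⁻¹ : R) * c, ?_⟩
  rw [mul_assoc, hc, ← mul_assoc, Units.inv_mul, one_mul]

lemma contentIdeal_quad_le {c0 c1 c2 : R} {I : Ideal R}
    (h0 : c0 ∈ I) (h1 : c1 ∈ I) (h2 : c2 ∈ I) :
    contentIdeal (C c2 * X ^ 2 + C c1 * X + C c0) ≤ I := by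
  rw [contentIdeal_le_iff]
  intro n
  match n with
  | 0 => simpa [coeff_X_pow] using h0
  | 1 => simpa [coeff_X_pow] using h1
  | 2 => simpa [coeff_X_pow] using h2
  | 3 => simpa [coeff_X_pow] using I.zero_mem
  | (n+4) => simpa [coeff_X_pow] using I.zero_mem

/-- Core step of the H1 lemma. -/
lemma gaussian_pair_core [IsLocalRing R] (hG : IsGaussianRing R) {a b e₀ f₀ : R}
    (hbe : b ^ 2 = e₀ * a ^ 2 + f₀ * (a * b)) :
    a * b ∈ span ({a ^ 2} : Set R) ∧ b ^ 2 ∈ span ({a ^ 2} : Set R) := by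
  -- P1 : a*b ∈ (a², b²)
  have hP1 : a * b ∈ span ({a ^ 2, b ^ 2} : Set R) := by
    set f : R[X] := C a * X + C b with hf
    set g : R[X] := C a * X - C b with hg
    have key : f * g = C (a ^ 2) * X ^ 2 + C 0 * X + C (-(b ^ 2)) := by
      simp only [hf, hg, _root_.map_mul, _root_.map_sub, _root_.map_add, _root_.map_pow,
        map_neg, map_zero]
      ring
    have hmem : a * b ∈ contentIdeal f * contentIdeal g := by
      have h1 : f.coeff 1 = a := by simp [hf]
      have h2 : g.coeff 0 = -b := by simp [hg]
      have h3 : a * b = -(f.coeff 1 * g.coeff 0) := by rw [h1, h2]; ring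
      rw [h3]
      exact neg_mem (Ideal.mul_mem_mul (coeff_mem_contentIdeal f 1)
        (coeff_mem_contentIdeal g 0))
    rw [← hG, key] at hmem
    refine contentIdeal_quad_le ?_ ?_ ?_ hmem
    · exact neg_mem (Ideal.subset_span (by right; rfl))
    · exact zero_mem _
    · exact Ideal.subset_span (by left; rfl)
  obtain ⟨r, s, hrs⟩ := Ideal.mem_span_pair.mp hP1
  have hkey : (1 - s * f₀) * (a * b) = (r + s * e₀) * a ^ 2 := by
    linear_combination s * hbe - hrs
  rcases IsLocalRing.isUnit_or_isUnit_one_sub_self (s * f₀) with hu | hu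
  swap
  · -- 1 - s*f₀ is a unit : a*b ∈ (a²), then b² ∈ (a²)
    have hab : a * b ∈ span ({a ^ 2} : Set R) := by
      refine mem_span_of_unit_mul hu ?_
      rw [hkey]
      exact Ideal.mem_span_singleton'.mpr ⟨r + s * e₀, rfl⟩
    refine ⟨hab, ?_⟩
    obtain ⟨c, hc⟩ := Ideal.mem_span_singleton'.mp hab
    exact Ideal.mem_span_singleton'.mpr ⟨e₀ + f₀ * c, by linear_combination f₀ * hc - hbe⟩
  · -- s*f₀ unit, so f₀ unit
    -- P4 : b² ∈ (ab)
    have hP4 : b ^ 2 ∈ span ({a * b} : Set R) := by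
      set f : R[X] := C a * X + C b with hf
      set g : R[X] := C b * X - C (e₀ * a) with hg
      have key : f * g
          = C (a * b) * X ^ 2 + C (b ^ 2 - e₀ * a ^ 2) * X + C (-(e₀ * (a * b))) := by
        simp only [hf, hg, _root_.map_mul, _root_.map_sub, _root_.map_add, _root_.map_pow,
          map_neg]
        ring
      have hmid : b ^ 2 - e₀ * a ^ 2 = f₀ * (a * b) := by linear_combination hbe
      rw [hmid] at key
      have hmem : b ^ 2 ∈ contentIdeal f * contentIdeal g := by
        have h1 : f.coeff 0 = b := by simp [hf]
        have h2 : g.coeff 1 = b := by simp [hg]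
        have h3 : b ^ 2 = f.coeff 0 * g.coeff 1 := by rw [h1, h2]; ring
        rw [h3]
        exact Ideal.mul_mem_mul (coeff_mem_contentIdeal f 0) (coeff_mem_contentIdeal g 1)
      rw [← hG, key] at hmem
      refine contentIdeal_quad_le ?_ ?_ ?_ hmem
      · exact neg_mem (Ideal.mul_mem_left _ _ (Ideal.mem_span_singleton_self _))
      · exact Ideal.mul_mem_left _ _ (Ideal.mem_span_singleton_self _)
      · exact Ideal.mem_span_singleton_self _
    obtain ⟨μ, hμ⟩ := Ideal.mem_span_singleton'.mp hP4
    have hkey2 : (1 - s * μ) * (a * b) = r * a ^ 2 := by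
      linear_combination - hrs - s * hμ
    rcases IsLocalRing.isUnit_or_isUnit_one_sub_self (s * μ) with hu2 | hu2
    swap
    · have hab : a * b ∈ span ({a ^ 2} : Set R) := by
        refine mem_span_of_unit_mul hu2 ?_
        rw [hkey2]
        exact Ideal.mem_span_singleton'.mpr ⟨r, rfl⟩
      refine ⟨hab, ?_⟩
      obtain ⟨c, hc⟩ := Ideal.mem_span_singleton'.mp hab
      exact Ideal.mem_span_singleton'.mpr ⟨μ * c, by linear_combination hμ + μ * hc⟩
    · -- μ is a unit; zero-product trick
      have hμu : IsUnit μ := isUnit_of_mul_isUnit_right hu2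
      set b' : R := b - μ * a with hb'
      have hbb' : b * b' = 0 := by rw [hb']; linear_combination -hμ
      have hP5 : b ^ 2 ∈ span ({b ^ 2 + b' ^ 2} : Set R) := by
        set f : R[X] := C b * X + C b' with hf
        set g : R[X] := C b' * X + C b with hg
        have key : f * g
            = C (b * b') * X ^ 2 + C (b ^ 2 + b' ^ 2) * X + C (b' * b) := by
          simp only [hf, hg, _root_.map_mul, _root_.map_add, _root_.map_pow]
          ring
        have hmem : b ^ 2 ∈ contentIdeal f * contentIdeal g := by
          have h1 : f.coeff 1 = b := by simp [hf]
          have h2 : g.coeff 0 = b := by simp [hg]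
          have h3 : b ^ 2 = f.coeff 1 * g.coeff 0 := by rw [h1, h2]; ring
          rw [h3]
          exact Ideal.mul_mem_mul (coeff_mem_contentIdeal f 1) (coeff_mem_contentIdeal g 0)
        rw [← hG, key] at hmem
        refine contentIdeal_quad_le ?_ ?_ ?_ hmem
        · rw [mul_comm] at hbb'; rw [hbb']; exact zero_mem _
        · exact Ideal.mem_span_singleton_self _
        · rw [hbb']; exact zero_mem _
      have hsum : b ^ 2 + b' ^ 2 = μ ^ 2 * a ^ 2 := by
        rw [hb']; linear_combination (-2 : R) * hμ
      rw [hsum] at hP5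
      have hb2 : b ^ 2 ∈ span ({a ^ 2} : Set R) := by
        obtain ⟨w, hw⟩ := Ideal.mem_span_singleton'.mp hP5
        exact Ideal.mem_span_singleton'.mpr ⟨w * μ ^ 2, by linear_combination hw⟩
      refine ⟨?_, hb2⟩
      refine mem_span_of_unit_mul hμu ?_
      rw [hμ]  -- μ * (a*b) = b^2... need goal μ * (a*b) ∈ span
      exact hb2

/-- H1: in a local Gaussian ring, for any `a b`,
`(a,b)²` is generated by `a²` or by `b²`. -/
lemma gaussian_pair [IsLocalRing R] (hG : IsGaussianRing R) (a b : R) :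
    (a * b ∈ span ({a ^ 2} : Set R) ∧ b ^ 2 ∈ span ({a ^ 2} : Set R)) ∨
    (a * b ∈ span ({b ^ 2} : Set R) ∧ a ^ 2 ∈ span ({b ^ 2} : Set R)) := by
  -- P2 : b² ∈ (ab, a²+b²)
  have hP2 : b ^ 2 ∈ span ({a * b, a ^ 2 + b ^ 2} : Set R) := by
    set f : R[X] := C a * X + C b with hf
    set g : R[X] := C b * X + C a with hg
    have key : f * g
        = C (a * b) * X ^ 2 + C (a ^ 2 + b ^ 2) * X + C (a * b) := by
      simp only [hf, hg, _root_.map_mul, _root_.map_add, _root_.map_pow]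
      ring
    have hmem : b ^ 2 ∈ contentIdeal f * contentIdeal g := by
      have h1 : f.coeff 0 = b := by simp [hf]
      have h2 : g.coeff 1 = b := by simp [hg]
      have h3 : b ^ 2 = f.coeff 0 * g.coeff 1 := by rw [h1, h2]; ring
      rw [h3]
      exact Ideal.mul_mem_mul (coeff_mem_contentIdeal f 0) (coeff_mem_contentIdeal g 1)
    rw [← hG, key] at hmem
    refine contentIdeal_quad_le ?_ ?_ ?_ hmem
    · exact Ideal.subset_span (by left; rfl)
    · exact Ideal.subset_span (by right; rfl)
    · exact Ideal.subset_span (by left; rfl)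
  obtain ⟨c', d', hcd⟩ := Ideal.mem_span_pair.mp hP2
  rcases IsLocalRing.isUnit_or_isUnit_one_sub_self d' with hd | hd
  · -- d' unit : a² ∈ (b², ab)
    obtain ⟨u, hu⟩ := hd
    have ha2 : a ^ 2 = ((↑u⁻¹ : R) * (1 - d')) * b ^ 2 + (-((↑u⁻¹ : R) * c')) * (b * a) := by
      have h0 : (↑u : R) = d' := hu
      have h1 : (↑u⁻¹ : R) * (↑u : R) = 1 := Units.inv_mul u
      rw [h0] at h1
      linear_combination (↑u⁻¹ : R) * hcd - a^2 * h1
    have := gaussian_pair_core hG (a := b) (b := a)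
      (e₀ := (↑u⁻¹ : R) * (1 - d')) (f₀ := -((↑u⁻¹ : R) * c')) ha2
    right
    exact ⟨by rw [mul_comm]; exact this.1, this.2⟩
  · -- 1 - d' unit : b² ∈ (a², ab)
    obtain ⟨u, hu⟩ := hd
    have hb2 : b ^ 2 = ((↑u⁻¹ : R) * d') * a ^ 2 + ((↑u⁻¹ : R) * c') * (a * b) := by
      have h0 : (↑u : R) = 1 - d' := hu
      have h1 : (↑u⁻¹ : R) * (↑u : R) = 1 := Units.inv_mul u
      rw [h0] at h1
      linear_combination - ((↑u⁻¹ : R) * hcd) - b^2 * h1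
    left
    exact gaussian_pair_core hG hb2


lemma contentIdeal_map {S : Type*} [CommRing S] (φ : R →+* S) (p : R[X]) :
    contentIdeal (p.map φ) = (contentIdeal p).map φ := by
  unfold contentIdeal
  rw [Ideal.map_span]
  congr 1
  have : (p.map φ).coeff = φ ∘ p.coeff := by
    funext n; exact coeff_map φ n
  rw [this, Set.range_comp]

lemma exists_dominant
    (H : ∀ x y : R, x ^ 2 ∈ span ({y ^ 2} : Set R) ∨ y ^ 2 ∈ span ({x ^ 2} : Set R)) :
    ∀ T : Finset R, T.Nonempty → ∃ d ∈ T, ∀ x ∈ T, x ^ 2 ∈ span ({d ^ 2} : Set R) := by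
  classical
  intro T
  induction T using Finset.induction_on with
  | empty => intro h; exact absurd h (by simp)
  | @insert a s ha ih =>
    intro _
    rcases s.eq_empty_or_nonempty with rfl | hs
    · refine ⟨a, by simp, ?_⟩
      intro x hx
      simp only [Finset.mem_insert, Finset.notMem_empty, or_false] at hx
      subst hx
      exact Ideal.mem_span_singleton_self _
    · obtain ⟨d, hd, hdom⟩ := ih hs
      rcases H a d with h | h
      · refine ⟨d, Finset.mem_insert_of_mem hd, ?_⟩
        intro x hx
        rcases Finset.mem_insert.mp hx with rfl | hx
        · exact h
        · exact hdom x hx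
      · refine ⟨a, Finset.mem_insert_self a s, ?_⟩
        intro x hx
        rcases Finset.mem_insert.mp hx with rfl | hx
        · exact Ideal.mem_span_singleton_self _
        · exact span_singleton_trans (hdom x hx) h

/-- Tsang's theorem: a local ring satisfying the two pair conditions is Gaussian. -/
theorem isGaussianRing_of_pairs [IsLocalRing R]
    (H1 : ∀ a b : R,
      (a * b ∈ span ({a ^ 2} : Set R) ∧ b ^ 2 ∈ span ({a ^ 2} : Set R)) ∨
      (a * b ∈ span ({b ^ 2} : Set R) ∧ a ^ 2 ∈ span ({b ^ 2} : Set R)))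
    (H2 : ∀ a b : R, a * b = 0 → b ^ 2 ∈ span ({a ^ 2} : Set R) → b ^ 2 = 0) :
    IsGaussianRing R := by
  classical
  -- cross products of square-zero elements vanish
  have hcross : ∀ x y : R, x ^ 2 = 0 → y ^ 2 = 0 → x * y = 0 := by
    intro x y hx hy
    rcases H1 x y with ⟨h1, _⟩ | ⟨h1, _⟩
    · rw [hx] at h1
      obtain ⟨c, hc⟩ := Ideal.mem_span_singleton'.mp h1
      rw [mul_zero] at hc; exact hc.symm
    · rw [hy] at h1
      obtain ⟨c, hc⟩ := Ideal.mem_span_singleton'.mp h1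
      rw [mul_zero] at hc; exact hc.symm
  -- decomposition along a dominant element
  have hdec : ∀ d x : R, x ^ 2 ∈ span ({d ^ 2} : Set R) →
      ∃ l π, x = l * d + π ∧ π * d = 0 ∧ π ^ 2 = 0 := by
    intro d x hx2
    have hxd : x * d ∈ span ({d ^ 2} : Set R) := by
      rcases H1 x d with ⟨h1, _⟩ | ⟨h1, _⟩
      · exact span_singleton_trans h1 hx2
      · exact h1
    obtain ⟨l, hl⟩ := Ideal.mem_span_singleton'.mp hxd
    have hπd : (x - l * d) * d = 0 := by linear_combination - hl
    refine ⟨l, x - l * d, by ring, hπd, ?_⟩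
    have hπ2 : (x - l * d) ^ 2 ∈ span ({d ^ 2} : Set R) := by
      obtain ⟨c, hc⟩ := Ideal.mem_span_singleton'.mp hx2
      exact Ideal.mem_span_singleton'.mpr ⟨c - l ^ 2, by linear_combination hc - 2 * l * hl⟩
    have hdπ : d * (x - l * d) = 0 := by rw [mul_comm]; exact hπd
    exact H2 d (x - l * d) hdπ hπ2
  -- the main case: the dominant coefficient lives in `p`
  have main : ∀ p q : R[X], ∀ i₀ : ℕ,
      (∀ n, (p.coeff n) ^ 2 ∈ span ({(p.coeff i₀) ^ 2} : Set R)) →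
      (∀ n, (q.coeff n) ^ 2 ∈ span ({(p.coeff i₀) ^ 2} : Set R)) →
      ∀ i j, p.coeff i * q.coeff j ∈ contentIdeal (p * q) := by
    intro p q i₀ hdomp hdomq i j
    set d : R := p.coeff i₀ with hd
    -- choose decompositions, normalized at zero coefficients
    have hdecP : ∀ n, ∃ l π, p.coeff n = l * d + π ∧ π * d = 0 ∧ π ^ 2 = 0 ∧
        (p.coeff n = 0 → l = 0) := by
      intro n
      by_cases h0 : p.coeff n = 0
      · exact ⟨0, 0, by simp [h0], by simp, by simp, fun _ => rfl⟩
      · obtain ⟨l, π, h1, h2, h3⟩ := hdec d _ (hdomp n)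
        exact ⟨l, π, h1, h2, h3, fun hc => absurd hc h0⟩
    have hdecQ : ∀ n, ∃ l π, q.coeff n = l * d + π ∧ π * d = 0 ∧ π ^ 2 = 0 ∧
        (q.coeff n = 0 → l = 0) := by
      intro n
      by_cases h0 : q.coeff n = 0
      · exact ⟨0, 0, by simp [h0], by simp, by simp, fun _ => rfl⟩
      · obtain ⟨l, π, h1, h2, h3⟩ := hdec d _ (hdomq n)
        exact ⟨l, π, h1, h2, h3, fun hc => absurd hc h0⟩
    choose lp πp hP1 hP2 hP3 hP0 using hdecP
    choose lq πq hQ1 hQ2 hQ3 hQ0 using hdecQ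
    -- the two coefficient polynomials
    set HH : R[X] := ∑ n ∈ p.support, C (lp n) * X ^ n with hHH
    set GG : R[X] := ∑ n ∈ q.support, C (lq n) * X ^ n with hGG
    have hHcoeff : ∀ m, HH.coeff m = lp m := by
      intro m
      rw [hHH, finset_sum_coeff]
      simp only [coeff_C_mul, coeff_X_pow]
      by_cases hm : m ∈ p.support
      · rw [Finset.sum_eq_single_of_mem m hm]
        · simp
        · intro n _ hne
          simp [Ne.symm hne]
      · rw [Finset.sum_eq_zero]
        · exact (hP0 m (Polynomial.notMem_support_iff.mp hm)).symm
        · intro n hn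
          have : m ≠ n := fun h => hm (h ▸ hn)
          simp [this]
    have hGcoeff : ∀ m, GG.coeff m = lq m := by
      intro m
      rw [hGG, finset_sum_coeff]
      simp only [coeff_C_mul, coeff_X_pow]
      by_cases hm : m ∈ q.support
      · rw [Finset.sum_eq_single_of_mem m hm]
        · simp
        · intro n _ hne
          simp [Ne.symm hne]
      · rw [Finset.sum_eq_zero]
        · exact (hQ0 m (Polynomial.notMem_support_iff.mp hm)).symm
        · intro n hn
          have : m ≠ n := fun h => hm (h ▸ hn)
          simp [this]
    -- coefficientwise product collapse
    have hPQcoeff : ∀ i j, p.coeff i * q.coeff j = d ^ 2 * (lp i * lq j) := by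
      intro i j
      have h3 : πp i * πq j = 0 := hcross _ _ (hP3 i) (hQ3 j)
      rw [hP1 i, hQ1 j]
      linear_combination (lp i) * hQ2 j + (lq j) * hP2 i + h3
    -- the product collapses
    have hprod : ∀ k, (p * q).coeff k = d ^ 2 * (HH * GG).coeff k := by
      intro k
      rw [coeff_mul, coeff_mul, Finset.mul_sum]
      refine Finset.sum_congr rfl ?_
      intro x _
      rw [hHcoeff, hGcoeff]
      exact hPQcoeff x.1 x.2
    by_cases hd2 : d ^ 2 = 0
    · rw [hPQcoeff i j, hd2, zero_mul]
      exact zero_mem _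
    · -- pass to R / (0 : d²)
      set I0 : Ideal R :=
        { carrier := {x | x * d ^ 2 = 0}
          add_mem' := by
            intro x y hx hy
            simp only [Set.mem_setOf_eq] at *
            rw [add_mul, hx, hy, add_zero]
          zero_mem' := by simp
          smul_mem' := by
            intro c x hx
            simp only [Set.mem_setOf_eq, smul_eq_mul] at *
            rw [mul_assoc, hx, mul_zero] } with hI0
      have hI0mem : ∀ x : R, x ∈ I0 ↔ x * d ^ 2 = 0 := fun x => Iff.rfl
      have hI0ne : I0 ≠ ⊤ := by
        intro h
        have h1 : (1 : R) ∈ I0 := h ▸ Submodule.mem_top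
        rw [hI0mem, one_mul] at h1
        exact hd2 h1
      haveI : Nontrivial (R ⧸ I0) := Ideal.Quotient.nontrivial_iff.mpr hI0ne
      haveI : IsLocalRing (R ⧸ I0) :=
        IsLocalRing.of_surjective' (Ideal.Quotient.mk I0) Ideal.Quotient.mk_surjective
      set mk := Ideal.Quotient.mk I0 with hmk
      have hlam1 : mk (lp i₀) = 1 := by
        have h1 : d = lp i₀ * d + πp i₀ := hP1 i₀
        have h2 : (1 - lp i₀) * d ^ 2 = 0 := by
          linear_combination d * h1 + hP2 i₀
        have h3 : mk (1 - lp i₀) = 0 := Ideal.Quotient.eq_zero_iff_mem.mpr h2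
        have h4 : mk 1 - mk (lp i₀) = 0 := by rw [← map_sub]; exact h3
        rw [map_one] at h4
        linear_combination - h4
      have hHunit : ∃ n, IsUnit ((HH.map mk).coeff n) :=
        ⟨i₀, by rw [coeff_map, hHcoeff, hlam1]; exact isUnit_one⟩
      have hLU := contentIdeal_le_of_isUnit_coeff hHunit (GG.map mk)
      have hmemG : mk (lq j) ∈ contentIdeal ((HH.map mk) * (GG.map mk)) := by
        apply hLU
        have h5 : (GG.map mk).coeff j = mk (lq j) := by rw [coeff_map, hGcoeff]
        exact h5 ▸ coeff_mem_contentIdeal _ j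
      have hmem2 : mk (lp i * lq j) ∈ contentIdeal ((HH.map mk) * (GG.map mk)) := by
        rw [_root_.map_mul]
        exact Ideal.mul_mem_left _ _ hmemG
      rw [← Polynomial.map_mul, contentIdeal_map] at hmem2
      obtain ⟨y, hy, hyeq⟩ :=
        (Ideal.mem_map_iff_of_surjective mk Ideal.Quotient.mk_surjective).mp hmem2
      have hdiff : lp i * lq j - y ∈ I0 := by
        have h6 : mk (lp i * lq j - y) = 0 := by rw [map_sub, hyeq, sub_self]
        exact Ideal.Quotient.eq_zero_iff_mem.mp h6
      have hdiff' : (lp i * lq j - y) * d ^ 2 = 0 := hdiff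
      have hyd : ∀ z ∈ contentIdeal (HH * GG), z * d ^ 2 ∈ contentIdeal (p * q) := by
        intro z hz
        induction hz using Submodule.span_induction with
        | mem w hw =>
          obtain ⟨k, hk⟩ := hw
          rw [← hk, mul_comm ((HH * GG).coeff k) (d ^ 2), ← hprod k]
          exact coeff_mem_contentIdeal (p * q) k
        | zero => rw [zero_mul]; exact zero_mem _
        | add x y _ _ hx hy => rw [add_mul]; exact add_mem hx hy
        | smul c x _ hx =>
          rw [smul_eq_mul, mul_assoc]
          exact Ideal.mul_mem_left _ _ hx
      have final : p.coeff i * q.coeff j = y * d ^ 2 + (lp i * lq j - y) * d ^ 2 := by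
        rw [hPQcoeff i j]; ring
      rw [final, hdiff', add_zero]
      exact hyd y hy
  -- assemble
  intro p q
  refine le_antisymm (contentIdeal_mul_le p q) ?_
  have hgen : ∀ i j, p.coeff i * q.coeff j ∈ contentIdeal (p * q) := by
    by_cases hp : p = 0
    · intro i j; subst hp; simp
    by_cases hq : q = 0
    · intro i j; subst hq; simp
    -- dominance over all coefficients
    set T : Finset R := p.support.image p.coeff ∪ q.support.image q.coeff with hT
    have hTne : T.Nonempty := by
      refine Finset.Nonempty.mono Finset.subset_union_left ?_
      exact (Finset.image_nonempty).mpr (Polynomial.support_nonempty.mpr hp)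
    have htot : ∀ x y : R, x ^ 2 ∈ span ({y ^ 2} : Set R) ∨ y ^ 2 ∈ span ({x ^ 2} : Set R) := by
      intro x y
      rcases H1 y x with ⟨_, h⟩ | ⟨_, h⟩
      · exact Or.inl h
      · exact Or.inr h
    obtain ⟨d, hdT, hdom⟩ := exists_dominant htot T hTne
    have hcoefmem : ∀ (r : R[X]) (n : ℕ), r = p ∨ r = q → (r.coeff n) ^ 2 ∈ span ({d ^ 2} : Set R) := by
      rintro r n (rfl | rfl)
      · by_cases hn : n ∈ r.support
        · exact hdom _ (Finset.mem_union_left _ (Finset.mem_image.mpr ⟨n, hn, rfl⟩))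
        · rw [Polynomial.notMem_support_iff.mp hn]
          rw [zero_pow (by norm_num)]
          exact zero_mem _
      · by_cases hn : n ∈ r.support
        · exact hdom _ (Finset.mem_union_right _ (Finset.mem_image.mpr ⟨n, hn, rfl⟩))
        · rw [Polynomial.notMem_support_iff.mp hn]
          rw [zero_pow (by norm_num)]
          exact zero_mem _
    rcases Finset.mem_union.mp hdT with hdp | hdq
    · obtain ⟨i₀, _, hi₀⟩ := Finset.mem_image.mp hdp
      intro i j
      exact main p q i₀ (fun n => hi₀ ▸ hcoefmem p n (Or.inl rfl))
        (fun n => hi₀ ▸ hcoefmem q n (Or.inr rfl)) i j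
    · obtain ⟨j₀, _, hj₀⟩ := Finset.mem_image.mp hdq
      intro i j
      have := main q p j₀ (fun n => hj₀ ▸ hcoefmem q n (Or.inr rfl))
        (fun n => hj₀ ▸ hcoefmem p n (Or.inl rfl)) j i
      rw [mul_comm q p] at this
      rw [mul_comm (p.coeff i) (q.coeff j)]
      exact this
  unfold contentIdeal
  rw [Ideal.span_mul_span']
  refine Ideal.span_le.mpr ?_
  rintro z hz
  obtain ⟨x, ⟨i, rfl⟩, y, ⟨j, rfl⟩, rfl⟩ := Set.mem_mul.mp hz
  exact hgen i j


lemma ideal_eq_bot_of_subsingleton [Subsingleton R] (I : Ideal R) : I = ⊥ := by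
  ext x
  simp [Subsingleton.elim x 0]

lemma isGaussianRing_of_subsingleton (R : Type*) [CommRing R] [Subsingleton R] :
    IsGaussianRing R := by
  intro p q
  rw [ideal_eq_bot_of_subsingleton (contentIdeal (p * q)),
    ideal_eq_bot_of_subsingleton (contentIdeal p),
    ideal_eq_bot_of_subsingleton (contentIdeal q), bot_mul]

end BiAmalg

open BiAmalg Ideal in
set_option maxHeartbeats 2000000 in
/-- if `(A,m)` is local, `A`, `f(A)+J`, `g(A)+J'` are Gaussian, `J² = 0`,
`J'² = 0`, `J × J' ⊆ Jac(B × C)`, and `f(a)J = f(a)²J`, `g(a)J' = g(a)²J'` for all `a ∈ m`,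
then the bi-amalgamation is Gaussian. -/
theorem biAmalgamation_isGaussian
    {A B C : Type*} [CommRing A] [CommRing B] [CommRing C] [IsLocalRing A]
    (f : A →+* B) (g : A →+* C) (J : Ideal B) (J' : Ideal C)
    (hcomap : J.comap f = J'.comap g)
    (hA : IsGaussianRing A)
    (hT₁ : ∃ T₁ : Subring B, (T₁ : Set B) = {b | ∃ a : A, ∃ j ∈ J, b = f a + j} ∧
      IsGaussianRing T₁)
    (hT₂ : ∃ T₂ : Subring C, (T₂ : Set C) = {c | ∃ a : A, ∃ j' ∈ J', c = g a + j'} ∧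
      IsGaussianRing T₂)
    (hJ2 : J * J = ⊥) (hJ'2 : J' * J' = ⊥)
    (hJac : J.prod J' ≤ (⊥ : Ideal (B × C)).jacobson)
    (hfJ : ∀ a ∈ IsLocalRing.maximalIdeal A,
      Ideal.span {f a} * J = Ideal.span {f a ^ 2} * J)
    (hgJ' : ∀ a ∈ IsLocalRing.maximalIdeal A,
      Ideal.span {g a} * J' = Ideal.span {g a ^ 2} * J') :
    ∀ S : Subring (B × C),
      (S : Set (B × C)) =
        {x | ∃ a : A, ∃ j ∈ J, ∃ j' ∈ J', x = (f a + j, g a + j')} →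
      IsGaussianRing S := by
  intro S hS
  classical
  have memS : ∀ x : B × C, x ∈ S ↔ ∃ a : A, ∃ j ∈ J, ∃ j' ∈ J', x = (f a + j, g a + j') := by
    intro x
    rw [← SetLike.mem_coe, hS]
    rfl
  have memσ : ∀ a : A, ((f a, g a) : B × C) ∈ S := by
    intro a
    rw [memS]
    exact ⟨a, 0, J.zero_mem, 0, J'.zero_mem, by simp⟩
  set σ : A →+* ↥S :=
    { toFun := fun a => ⟨(f a, g a), memσ a⟩
      map_one' := by apply Subtype.ext; simp [Prod.ext_iff]
      map_mul' := by intro x y; apply Subtype.ext; simp [Prod.ext_iff]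
      map_zero' := by apply Subtype.ext; simp [Prod.ext_iff]
      map_add' := by intro x y; apply Subtype.ext; simp [Prod.ext_iff] } with hσdef
  have hσval : ∀ a : A, (σ a : B × C) = (f a, g a) := fun a => rfl
  set inK : ↥S → Prop := fun s => (s : B × C).1 ∈ J ∧ (s : B × C).2 ∈ J' with hinK
  have memK : ∀ j ∈ J, ∀ j' ∈ J', ((j, j') : B × C) ∈ S := by
    intro j hj j' hj'
    rw [memS]
    exact ⟨0, j, hj, j', hj', by simp⟩
  have hdecomp : ∀ s : ↥S, ∃ a : A, ∃ κ : ↥S, inK κ ∧ s = σ a + κ := by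
    intro s
    obtain ⟨a, j, hj, j', hj', hx⟩ := (memS s).mp s.2
    refine ⟨a, ⟨(j, j'), memK j hj j' hj'⟩, ⟨hj, hj'⟩, ?_⟩
    apply Subtype.ext
    rw [hx]
    rfl
  have hK2 : ∀ x y : ↥S, inK x → inK y → x * y = 0 := by
    intro x y hx hy
    have h1 : (x : B × C).1 * (y : B × C).1 = 0 :=
      Ideal.mem_bot.mp (hJ2 ▸ Ideal.mul_mem_mul hx.1 hy.1)
    have h2 : (x : B × C).2 * (y : B × C).2 = 0 :=
      Ideal.mem_bot.mp (hJ'2 ▸ Ideal.mul_mem_mul hx.2 hy.2)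
    apply Subtype.ext
    show ((x : B × C) * (y : B × C)) = (0 : B × C)
    exact Prod.ext (by simpa using h1) (by simpa using h2)
  have hKneg : ∀ κ : ↥S, inK κ → inK (-κ) := by
    intro κ hκ
    exact ⟨by simpa using J.neg_mem hκ.1, by simpa using J'.neg_mem hκ.2⟩
  have hcond : ∀ a, ¬IsUnit a → ∀ κ : ↥S, inK κ →
      ∃ κ' : ↥S, inK κ' ∧ σ a * κ = (σ a) ^ 2 * κ' := by
    intro a ha κ hκ
    have ham : a ∈ IsLocalRing.maximalIdeal A := (IsLocalRing.mem_maximalIdeal a).mpr ha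
    have h1 : f a * (κ : B × C).1 ∈ Ideal.span {f a ^ 2} * J := by
      rw [← hfJ a ham]
      exact Ideal.mul_mem_mul (Ideal.mem_span_singleton_self _) hκ.1
    have h2 : g a * (κ : B × C).2 ∈ Ideal.span {g a ^ 2} * J' := by
      rw [← hgJ' a ham]
      exact Ideal.mul_mem_mul (Ideal.mem_span_singleton_self _) hκ.2
    obtain ⟨j₁, hj₁, hj₁eq⟩ := Ideal.mem_span_singleton_mul.mp h1
    obtain ⟨j₂, hj₂, hj₂eq⟩ := Ideal.mem_span_singleton_mul.mp h2
    refine ⟨⟨(j₁, j₂), memK j₁ hj₁ j₂ hj₂⟩, ⟨hj₁, hj₂⟩, ?_⟩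
    apply Subtype.ext
    show (σ a : B × C) * (κ : B × C) = ((σ a : B × C)) ^ 2 * (j₁, j₂)
    rw [hσval]
    exact Prod.ext (by simpa using hj₁eq.symm) (by simpa using hj₂eq.symm)
  have hσunit : ∀ a : A, IsUnit a → ∀ κ : ↥S, inK κ → IsUnit (σ a + κ) := by
    intro a ha κ hκ
    obtain ⟨u, hu⟩ := ha
    set x : ↥S := σ ((↑u⁻¹ : A)) with hx
    refine isUnit_iff_exists_inv.mpr ⟨x - x * x * κ, ?_⟩
    have h1 : σ a * x = 1 := by
      rw [hx, ← _root_.map_mul]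
      have : a * (↑u⁻¹ : A) = 1 := by rw [← hu]; exact u.mul_inv
      rw [this, _root_.map_one]
    have h2 : κ * κ = 0 := hK2 κ κ hκ hκ
    linear_combination (1 - x * κ) * h1 - x ^ 2 * h2
  by_cases htriv : (1 : B) ∈ J
  · -- S is the zero ring
    have h1A : (1 : A) ∈ J.comap f := by
      rw [Ideal.mem_comap, _root_.map_one]; exact htriv
    have h1C : (1 : C) ∈ J' := by
      rw [hcomap, Ideal.mem_comap, _root_.map_one] at h1A
      exact h1A
    have hB0 : (1 : B) = 0 :=
      Ideal.mem_bot.mp (hJ2 ▸ (by simpa using Ideal.mul_mem_mul htriv htriv))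
    have hC0 : (1 : C) = 0 :=
      Ideal.mem_bot.mp (hJ'2 ▸ (by simpa using Ideal.mul_mem_mul h1C h1C))
    have h10 : (0 : ↥S) = 1 := by
      apply Subtype.ext
      show (0 : B × C) = (1 : B × C)
      exact Prod.ext (by simpa using hB0.symm) (by simpa using hC0.symm)
    haveI : Subsingleton ↥S := subsingleton_of_zero_eq_one h10
    exact isGaussianRing_of_subsingleton _
  · haveI : Nontrivial ↥S := by
      refine ⟨1, 0, fun h => htriv ?_⟩
      have h1 : ((1 : ↥S) : B × C).1 = ((0 : ↥S) : B × C).1 := by rw [h]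
      have h2 : (1 : B) = 0 := by simpa using h1
      rw [h2]
      exact J.zero_mem
    haveI : IsLocalRing ↥S := by
      apply IsLocalRing.of_isUnit_or_isUnit_one_sub_self
      intro s
      obtain ⟨a, κ, hκ, rfl⟩ := hdecomp s
      by_cases ha : IsUnit a
      · exact Or.inl (hσunit a ha κ hκ)
      · right
        have h1 : IsUnit (1 - a) :=
          IsLocalRing.isUnit_one_sub_self_of_mem_nonunits a ha
        have h2 : (1 : ↥S) - (σ a + κ) = σ (1 - a) + -κ := by
          rw [_root_.map_sub, _root_.map_one]; ring
        rw [h2]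
        exact hσunit _ h1 (-κ) (hKneg κ hκ)
    -- H1 for S
    have claim1 : ∀ a : A, ¬IsUnit a → ∀ u κ : ↥S, inK u → inK κ →
        σ a * κ ∈ span ({(σ a + u) ^ 2} : Set ↥S) := by
      intro a ha u κ hu hκ
      obtain ⟨κ', hκ', he⟩ := hcond a ha κ hκ
      refine Ideal.mem_span_singleton'.mpr ⟨κ', ?_⟩
      have h2 : u * κ' = 0 := hK2 u κ' hu hκ'
      have h3 : u * u = 0 := hK2 u u hu hu
      linear_combination - he + (2 * σ a) * h2 + κ' * h3
    have claim2 : ∀ a : A, ¬IsUnit a → ∀ u : ↥S, inK u →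
        σ (a * a) ∈ span ({(σ a + u) ^ 2} : Set ↥S) := by
      intro a ha u hu
      obtain ⟨c, hc⟩ := Ideal.mem_span_singleton'.mp (claim1 a ha u u hu hu)
      refine Ideal.mem_span_singleton'.mpr ⟨1 - 2 * c, ?_⟩
      have h4 : σ (a * a) = σ a * σ a := _root_.map_mul σ a a
      have h5 : u * u = 0 := hK2 u u hu hu
      linear_combination - h4 - 2 * hc + h5
    have H1S_core : ∀ a b : A, ∀ u v : ↥S, inK u → inK v → ¬IsUnit a → ¬IsUnit b →
        (a * b ∈ span ({a ^ 2} : Set A) ∧ b ^ 2 ∈ span ({a ^ 2} : Set A)) →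
        ((σ a + u) * (σ b + v) ∈ span ({(σ a + u) ^ 2} : Set ↥S) ∧
          (σ b + v) ^ 2 ∈ span ({(σ a + u) ^ 2} : Set ↥S)) := by
      intro a b u v hu hv ha hb hab2
      obtain ⟨hab, hb2⟩ := hab2
      obtain ⟨α, hα⟩ := Ideal.mem_span_singleton'.mp hab
      obtain ⟨β, hβ⟩ := Ideal.mem_span_singleton'.mp hb2
      have m1 : σ a * v ∈ span ({(σ a + u) ^ 2} : Set ↥S) := claim1 a ha u v hu hv
      have hbsq : (σ b) ^ 2 = σ β * σ (a * a) := by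
        rw [← _root_.map_pow, ← _root_.map_mul]
        congr 1
        rw [← hβ]; ring
      have m2 : σ b * u ∈ span ({(σ a + u) ^ 2} : Set ↥S) := by
        obtain ⟨κ₁, hκ₁, he⟩ := hcond b hb u hu
        rw [he, hbsq]
        have := claim2 a ha u hu
        obtain ⟨c, hc⟩ := Ideal.mem_span_singleton'.mp this
        refine Ideal.mem_span_singleton'.mpr ⟨σ β * c * κ₁, ?_⟩
        linear_combination (σ β * κ₁) * hc
      have m5 : σ b * v ∈ span ({(σ a + u) ^ 2} : Set ↥S) := by
        obtain ⟨κ₁, hκ₁, he⟩ := hcond b hb v hv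
        rw [he, hbsq]
        obtain ⟨c, hc⟩ := Ideal.mem_span_singleton'.mp (claim2 a ha u hu)
        refine Ideal.mem_span_singleton'.mpr ⟨σ β * c * κ₁, ?_⟩
        linear_combination (σ β * κ₁) * hc
      have m3 : σ (a * b) ∈ span ({(σ a + u) ^ 2} : Set ↥S) := by
        have h6 : σ (a * b) = σ α * σ (a * a) := by
          rw [← _root_.map_mul]
          congr 1
          linear_combination - hα
        rw [h6]
        exact Ideal.mul_mem_left _ _ (claim2 a ha u hu)
      have m4 : σ (b * b) ∈ span ({(σ a + u) ^ 2} : Set ↥S) := by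
        have h6 : σ (b * b) = σ β * σ (a * a) := by
          rw [← _root_.map_mul]
          congr 1
          linear_combination - hβ
        rw [h6]
        exact Ideal.mul_mem_left _ _ (claim2 a ha u hu)
      constructor
      · have hexp : (σ a + u) * (σ b + v) = σ (a * b) + σ a * v + σ b * u + u * v := by
          rw [_root_.map_mul]; ring
        rw [hexp, hK2 u v hu hv, add_zero]
        exact add_mem (add_mem m3 m1) m2
      · have hexp : (σ b + v) ^ 2 = σ (b * b) + 2 * (σ b * v) + v * v := by
          rw [_root_.map_mul]; ring
        rw [hexp, hK2 v v hv hv, add_zero]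
        exact add_mem m4 (Ideal.mul_mem_left _ _ m5)
    have H1S : ∀ x y : ↥S,
        (x * y ∈ span ({x ^ 2} : Set ↥S) ∧ y ^ 2 ∈ span ({x ^ 2} : Set ↥S)) ∨
        (x * y ∈ span ({y ^ 2} : Set ↥S) ∧ x ^ 2 ∈ span ({y ^ 2} : Set ↥S)) := by
      intro x y
      obtain ⟨a, u, hu, rfl⟩ := hdecomp x
      obtain ⟨b, v, hv, rfl⟩ := hdecomp y
      by_cases ha : IsUnit a
      · left
        have hx : IsUnit (σ a + u) := hσunit a ha u hu
        have htop : span ({(σ a + u) ^ 2} : Set ↥S) = ⊤ :=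
          Ideal.span_singleton_eq_top.mpr (hx.pow 2)
        rw [htop]
        exact ⟨Submodule.mem_top, Submodule.mem_top⟩
      by_cases hb : IsUnit b
      · right
        have hy : IsUnit (σ b + v) := hσunit b hb v hv
        have htop : span ({(σ b + v) ^ 2} : Set ↥S) = ⊤ :=
          Ideal.span_singleton_eq_top.mpr (hy.pow 2)
        rw [htop]
        exact ⟨Submodule.mem_top, Submodule.mem_top⟩
      rcases gaussian_pair hA a b with h | h
      · exact Or.inl (H1S_core a b u v hu hv ha hb h)
      · right
        have h' : b * a ∈ span ({b ^ 2} : Set A) ∧ a ^ 2 ∈ span ({b ^ 2} : Set A) := by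
          rwa [mul_comm a b] at h
        have := H1S_core b a v u hv hu hb ha h'
        exact ⟨by rw [mul_comm]; exact this.1, this.2⟩
    -- H2 for S via T₁ and T₂
    obtain ⟨T₁, hT₁c, hT₁G⟩ := hT₁
    obtain ⟨T₂, hT₂c, hT₂G⟩ := hT₂
    have memT₁ : ∀ s : ↥S, ((s : B × C).1) ∈ T₁ := by
      intro s
      obtain ⟨a, j, hj, j', hj', hx⟩ := (memS s).mp s.2
      rw [← SetLike.mem_coe, hT₁c]
      exact ⟨a, j, hj, by rw [hx]⟩
    have memT₂ : ∀ s : ↥S, ((s : B × C).2) ∈ T₂ := by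
      intro s
      obtain ⟨a, j, hj, j', hj', hx⟩ := (memS s).mp s.2
      rw [← SetLike.mem_coe, hT₂c]
      exact ⟨a, j', hj', by rw [hx]⟩
    set π₁ : ↥S →+* ↥T₁ :=
      { toFun := fun s => ⟨(s : B × C).1, memT₁ s⟩
        map_one' := by apply Subtype.ext; simp
        map_mul' := by intro x y; apply Subtype.ext; simp
        map_zero' := by apply Subtype.ext; simp
        map_add' := by intro x y; apply Subtype.ext; simp } with hπ₁def
    set π₂ : ↥S →+* ↥T₂ :=
      { toFun := fun s => ⟨(s : B × C).2, memT₂ s⟩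
        map_one' := by apply Subtype.ext; simp
        map_mul' := by intro x y; apply Subtype.ext; simp
        map_zero' := by apply Subtype.ext; simp
        map_add' := by intro x y; apply Subtype.ext; simp } with hπ₂def
    have H2S : ∀ x y : ↥S, x * y = 0 → y ^ 2 ∈ span ({x ^ 2} : Set ↥S) → y ^ 2 = 0 := by
      intro x y hxy hy2
      obtain ⟨c, hc⟩ := Ideal.mem_span_singleton'.mp hy2
      have e1 : (π₁ y) ^ 2 = 0 := by
        refine sq_eq_zero_of_gaussian hT₁G (a := π₁ x) (b := π₁ y) ?_ ?_
        · rw [← _root_.map_mul, hxy, _root_.map_zero]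
        · refine Ideal.mem_span_singleton'.mpr ⟨π₁ c, ?_⟩
          rw [← _root_.map_pow, ← _root_.map_mul, hc, _root_.map_pow]
      have e2 : (π₂ y) ^ 2 = 0 := by
        refine sq_eq_zero_of_gaussian hT₂G (a := π₂ x) (b := π₂ y) ?_ ?_
        · rw [← _root_.map_mul, hxy, _root_.map_zero]
        · refine Ideal.mem_span_singleton'.mpr ⟨π₂ c, ?_⟩
          rw [← _root_.map_pow, ← _root_.map_mul, hc, _root_.map_pow]
      have e1' : ((y ^ 2 : ↥S) : B × C).1 = 0 := by
        have h7 : π₁ (y ^ 2) = 0 := by rw [_root_.map_pow]; exact e1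
        exact congrArg Subtype.val h7
      have e2' : ((y ^ 2 : ↥S) : B × C).2 = 0 := by
        have h7 : π₂ (y ^ 2) = 0 := by rw [_root_.map_pow]; exact e2
        exact congrArg Subtype.val h7
      apply Subtype.ext
      show ((y ^ 2 : ↥S) : B × C) = (0 : B × C)
      exact Prod.ext (by simpa using e1') (by simpa using e2')
    exact isGaussianRing_of_pairs H1S H2S
end

section
/- Let (A, m) be a local ring with A Gaussian, J² = 0, J'² = 0, J, J' nonzero proper ideals with J × J' ⊆ Jac(B × C), and I₀ := f⁻¹(J) = g⁻¹(J') a prime ideal of A. If the bi-amalgamation A ⋈^{f,g} (J, J') is Gaussian, then for every a ∈ m, f(a)J = f(a)²J and g(a)J' = g(a)²J'. -/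
set_option maxHeartbeats 800000 in
open Polynomial in
lemma gaussian_key {R : Type*} [CommRing R] (hR : IsGaussianRing R) (x y : R)
    (hy : y * y = 0) : ∃ s : R, x * y = x * x * s := by
  have hpq : (C x + C y * X) * (C x - C y * X) = C (x * x) := by
    have h2 : (C y : Polynomial R) * C y = 0 := by rw [← map_mul, hy, map_zero]
    have h3 : (C x + C y * X) * (C x - C y * X)
        = C x * C x - (C y * C y) * X ^ 2 := by ring
    rw [h3, h2, map_mul]; ring
  have hx : x ∈ _root_.contentIdeal (C x + C y * X) := by
    refine Ideal.subset_span ⟨0, ?_⟩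
    simp
  have hny : -y ∈ _root_.contentIdeal (C x - C y * X) := by
    refine Ideal.subset_span ⟨1, ?_⟩
    simp
  have hmem : x * y ∈ _root_.contentIdeal ((C x + C y * X) * (C x - C y * X)) := by
    rw [hR]
    have h4 := Ideal.mul_mem_mul hx hny
    have h5 : x * -y = -(x * y) := by ring
    rw [h5] at h4
    simpa using neg_mem h4
  rw [hpq] at hmem
  have hle : _root_.contentIdeal (C (x * x)) ≤ Ideal.span {x * x} := by
    rw [_root_.contentIdeal, Ideal.span_le]
    rintro _ ⟨n, rfl⟩
    rcases eq_or_ne n 0 with h | h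
    · rw [h, Polynomial.coeff_C_zero]
      exact Ideal.subset_span rfl
    · rw [Polynomial.coeff_C, if_neg h]
      exact zero_mem _
  obtain ⟨s, hs⟩ := Ideal.mem_span_singleton'.mp (hle hmem)
  exact ⟨s, by rw [← hs]; ring⟩

lemma side_eq {B : Type*} [CommRing B] (J : Ideal B) (x : B)
    (h : ∀ j ∈ J, x * j ∈ Ideal.span {x ^ 2} * J) :
    Ideal.span {x} * J = Ideal.span {x ^ 2} * J := by
  apply le_antisymm
  · rw [Ideal.mul_le]
    intro r hr j hj
    obtain ⟨c, rfl⟩ := Ideal.mem_span_singleton'.mp hr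
    have h1 : c * x * j = c * (x * j) := by ring
    rw [h1]
    exact Ideal.mul_mem_left _ _ (h j hj)
  · apply Ideal.mul_mono_left
    rw [Ideal.span_le]
    intro y hy
    rw [Set.mem_singleton_iff] at hy
    subst hy
    exact Ideal.mem_span_singleton.mpr ⟨x, by ring⟩

/-- if `(A,m)` is local with `A` Gaussian, `J² = 0`, `J'² = 0`, `J, J'`
nonzero proper with `J × J' ⊆ Jac(B × C)` and `I₀ = f⁻¹(J) = g⁻¹(J')` prime, and the
bi-amalgamation is Gaussian, then `f(a)J = f(a)²J` and `g(a)J' = g(a)²J'` for all `a ∈ m`. -/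
theorem biAmalgamation_gaussian_imp_multiplication_condition
    {A B C : Type*} [CommRing A] [CommRing B] [CommRing C] [IsLocalRing A]
    (f : A →+* B) (g : A →+* C) (J : Ideal B) (J' : Ideal C)
    (hcomap : J.comap f = J'.comap g)
    (hA : IsGaussianRing A)
    (hJ2 : J * J = ⊥) (hJ'2 : J' * J' = ⊥)
    (hJ0 : J ≠ ⊥) (hJt : J ≠ ⊤) (hJ'0 : J' ≠ ⊥) (hJ't : J' ≠ ⊤)
    (hJac : J.prod J' ≤ (⊥ : Ideal (B × C)).jacobson)
    (hI₀ : (J.comap f).IsPrime) :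
    ∀ S : Subring (B × C),
      (S : Set (B × C)) =
        {x | ∃ a : A, ∃ j ∈ J, ∃ j' ∈ J', x = (f a + j, g a + j')} →
      IsGaussianRing S →
      ∀ a ∈ IsLocalRing.maximalIdeal A,
        Ideal.span {f a} * J = Ideal.span {f a ^ 2} * J ∧
        Ideal.span {g a} * J' = Ideal.span {g a ^ 2} * J' := by
  intro S hS hSG a ha
  have hmemS : ∀ (a' : A) (j : B) (j' : C), j ∈ J → j' ∈ J' →
      (f a' + j, g a' + j') ∈ S := by
    intro a' j j' hj hj'
    have : (f a' + j, g a' + j') ∈ (S : Set (B × C)) := by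
      rw [hS]; exact ⟨a', j, hj, j', hj', rfl⟩
    exact this
  have hxS : (f a, g a) ∈ S := by simpa using hmemS a 0 0 J.zero_mem J'.zero_mem
  constructor
  · apply side_eq
    intro j hj
    have hyS : ((j : B), (0 : C)) ∈ S := by simpa using hmemS 0 j 0 hj J'.zero_mem
    set xs : S := ⟨(f a, g a), hxS⟩ with hxs
    set ys : S := ⟨(j, 0), hyS⟩ with hys
    have hjj : j * j = 0 := by
      have := Ideal.mul_mem_mul hj hj
      rwa [hJ2, Ideal.mem_bot] at this
    have hyy : ys * ys = 0 := by
      apply Subtype.ext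
      show ((j, (0 : C)) : B × C) * (j, 0) = 0
      simp [Prod.ext_iff, hjj]
    obtain ⟨s, hs⟩ := gaussian_key hSG xs ys hyy
    have hsv := s.2
    rw [← SetLike.mem_coe, hS] at hsv
    obtain ⟨b, k, hk, k', hk', hsval⟩ := hsv
    have hval : ((xs * ys : S) : B × C).1 = ((xs * xs * s : S) : B × C).1 := by rw [hs]
    have heq : f a * j = f a * f a * (f b + k) := by
      have h1 : ((xs * ys : S) : B × C).1 = f a * j := rfl
      have h2 : ((xs * xs * s : S) : B × C).1 = f a * f a * ((s : B × C)).1 := rfl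
      rw [h1, h2, hsval] at hval
      exact hval
    have habI : a * a * b ∈ J.comap f := by
      rw [Ideal.mem_comap, map_mul, map_mul]
      have h3 : f a * f a * f b = f a * j - f a * f a * k := by rw [heq]; ring
      rw [h3]
      exact J.sub_mem (J.mul_mem_left _ hj) (J.mul_mem_left _ hk)
    have hend : f a ∈ J → f a * j ∈ Ideal.span {f a ^ 2} * J := by
      intro hfa
      have h0 : f a * j = 0 := by
        have := Ideal.mul_mem_mul hfa hj
        rwa [hJ2, Ideal.mem_bot] at this
      rw [h0]; exact Ideal.zero_mem _
    rcases hI₀.mem_or_mem habI with hab | hb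
    · rcases hI₀.mem_or_mem hab with haI | haI <;> exact hend haI
    · have hfbk : f b + k ∈ J := J.add_mem hb hk
      rw [heq, show f a * f a = f a ^ 2 by ring]
      exact Ideal.mul_mem_mul (Ideal.mem_span_singleton_self _) hfbk
  · apply side_eq
    intro j' hj'
    have hyS : ((0 : B), (j' : C)) ∈ S := by simpa using hmemS 0 0 j' J.zero_mem hj'
    set xs : S := ⟨(f a, g a), hxS⟩ with hxs
    set ys : S := ⟨(0, j'), hyS⟩ with hys
    have hjj : j' * j' = 0 := by
      have := Ideal.mul_mem_mul hj' hj'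
      rwa [hJ'2, Ideal.mem_bot] at this
    have hyy : ys * ys = 0 := by
      apply Subtype.ext
      show (((0 : B), j') : B × C) * (0, j') = 0
      simp [Prod.ext_iff, hjj]
    obtain ⟨s, hs⟩ := gaussian_key hSG xs ys hyy
    have hsv := s.2
    rw [← SetLike.mem_coe, hS] at hsv
    obtain ⟨b, k, hk, k', hk', hsval⟩ := hsv
    have hval : ((xs * ys : S) : B × C).2 = ((xs * xs * s : S) : B × C).2 := by rw [hs]
    have heq : g a * j' = g a * g a * (g b + k') := by
      have h1 : ((xs * ys : S) : B × C).2 = g a * j' := rfl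
      have h2 : ((xs * xs * s : S) : B × C).2 = g a * g a * ((s : B × C)).2 := rfl
      rw [h1, h2, hsval] at hval
      exact hval
    have habI : a * a * b ∈ J.comap f := by
      rw [hcomap, Ideal.mem_comap, map_mul, map_mul]
      have h3 : g a * g a * g b = g a * j' - g a * g a * k' := by rw [heq]; ring
      rw [h3]
      exact J'.sub_mem (J'.mul_mem_left _ hj') (J'.mul_mem_left _ hk')
    have hend : g a ∈ J' → g a * j' ∈ Ideal.span {g a ^ 2} * J' := by
      intro hga
      have h0 : g a * j' = 0 := by
        have := Ideal.mul_mem_mul hga hj'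
        rwa [hJ'2, Ideal.mem_bot] at this
      rw [h0]; exact Ideal.zero_mem _
    rcases hI₀.mem_or_mem habI with hab | hb
    · rcases hI₀.mem_or_mem hab with haI | haI <;>
        exact hend (by rw [hcomap] at haI; exact haI)
    · have hgbk : g b + k' ∈ J' := J'.add_mem (by rw [hcomap] at hb; exact hb) hk'
      rw [heq, show g a * g a = g a ^ 2 by ring]
      exact Ideal.mul_mem_mul (Ideal.mem_span_singleton_self _) hgbk
end

section
/- Let (A, m) be a local total ring of quotients (every element is a unit or a zero-divisor), f : A → B injective, J and J' nonzero proper ideals of B and C with f⁻¹(J) = g⁻¹(J'), J × J' ⊆ Jac(B × C), J² = 0, and J'² = 0. Then the bi-amalgamation A ⋈^{f,g} (J, J') is a local total ring of quotients; in particular it is a Prüfer ring. -/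
/-- A total ring of quotients: every element is a unit or a zero-divisor. -/
def IsTotalRingOfQuotients (R : Type*) [CommRing R] : Prop :=
  ∀ x : R, IsUnit x ∨ ∃ y : R, y ≠ 0 ∧ x * y = 0

/-- In a total ring of quotients, every regular element is a unit, so every regular
finitely generated ideal is the unit ideal, hence invertible. -/
theorem IsTotalRingOfQuotients.isPruferRing {R : Type*} [CommRing R]
    (h : IsTotalRingOfQuotients R) : IsPruferRing R := by
  rintro I _ ⟨r, hrI, hr⟩
  have hru : IsUnit r := by
    rcases h r with h' | ⟨y, hy0, hxy⟩
    · exact h'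
    · exact absurd (mem_nonZeroDivisors_iff_left.1 hr y hxy) hy0
  have : I = ⊤ := I.eq_top_of_isUnit_mem hrI hru
  rw [this, FractionalIdeal.coeIdeal_top]
  exact isUnit_one

/-- if `(A,m)` is a local total ring of quotients, `f` injective, `J, J'`
nonzero proper, `J × J' ⊆ Jac(B × C)`, `J² = 0`, `J'² = 0`, then the bi-amalgamation is a
local total ring of quotients; in particular it is Prüfer. -/
theorem biAmalgamation_totalRingOfQuotients
    {A B C : Type*} [CommRing A] [CommRing B] [CommRing C] [IsLocalRing A]
    (f : A →+* B) (g : A →+* C) (J : Ideal B) (J' : Ideal C)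
    (hcomap : J.comap f = J'.comap g)
    (hA : IsTotalRingOfQuotients A)
    (hf : Function.Injective f)
    (hJ0 : J ≠ ⊥) (hJt : J ≠ ⊤) (hJ'0 : J' ≠ ⊥) (hJ't : J' ≠ ⊤)
    (hJac : J.prod J' ≤ (⊥ : Ideal (B × C)).jacobson)
    (hJ2 : J * J = ⊥) (hJ'2 : J' * J' = ⊥) :
    ∀ S : Subring (B × C),
      (S : Set (B × C)) =
        {x | ∃ a : A, ∃ j ∈ J, ∃ j' ∈ J', x = (f a + j, g a + j')} →
      IsLocalRing S ∧ IsTotalRingOfQuotients S ∧ IsPruferRing S := by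
  intro S hS
  have memS : ∀ z : B × C,
      z ∈ S ↔ ∃ a : A, ∃ j ∈ J, ∃ j' ∈ J', z = (f a + j, g a + j') := by
    intro z
    rw [← SetLike.mem_coe, hS]
    exact Iff.rfl
  have hBnt : Nontrivial B := by
    by_contra h
    rw [not_nontrivial_iff_subsingleton] at h
    exact hJt (Subsingleton.elim _ _)
  have hJmul : ∀ x y : B, x ∈ J → y ∈ J → x * y = 0 := by
    intro x y hx hy
    have := Ideal.mul_mem_mul hx hy
    rw [hJ2, Ideal.mem_bot] at this
    exact this
  have hJ'mul : ∀ x y : C, x ∈ J' → y ∈ J' → x * y = 0 := by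
    intro x y hx hy
    have := Ideal.mul_mem_mul hx hy
    rw [hJ'2, Ideal.mem_bot] at this
    exact this
  -- if the `A`-component of an element of `S` is a unit, the element is a unit of `S`
  have hunit : ∀ (x : S) (a : A) (j : B) (j' : C), j ∈ J → j' ∈ J' →
      (x : B × C) = (f a + j, g a + j') → IsUnit a → IsUnit x := by
    rintro x a j j' hj hj' hx ⟨u, rfl⟩
    set c : A := ((u⁻¹ : Aˣ) : A) with hc
    set t : B × C := (f c + -(f c * f c * j), g c + -(g c * g c * j')) with ht
    have htS : t ∈ S :=
      (memS t).2 ⟨c, -(f c * f c * j), J.neg_mem (J.mul_mem_left _ hj),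
        -(g c * g c * j'), J'.neg_mem (J'.mul_mem_left _ hj'), rfl⟩
    refine IsUnit.of_mul_eq_one (a := x) ⟨t, htS⟩ ?_
    have h1 : f ↑u * f c = 1 := by rw [← map_mul, Units.mul_inv, map_one]
    have h1' : g ↑u * g c = 1 := by rw [← map_mul, Units.mul_inv, map_one]
    have h2 : j * j = 0 := hJmul j j hj hj
    have h2' : j' * j' = 0 := hJ'mul j' j' hj' hj'
    apply Subtype.ext
    show ((x : B × C) * t) = 1
    rw [hx, ht]
    have e1 : (f ↑u + j) * (f c + -(f c * f c * j)) = 1 := by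
      linear_combination (1 - f c * j) * h1 - f c * f c * h2
    have e2 : (g ↑u + j') * (g c + -(g c * g c * j')) = 1 := by
      linear_combination (1 - g c * j') * h1' - g c * g c * h2'
    rw [Prod.mk_mul_mk, e1, e2]
    rfl
  have hSnt : Nontrivial S := by
    refine ⟨0, 1, fun h => ?_⟩
    have := congrArg (fun s : S => (s : B × C).1) h
    simp at this
  have hlocal : IsLocalRing S := by
    apply IsLocalRing.of_isUnit_or_isUnit_one_sub_self
    intro x
    obtain ⟨a, j, hj, j', hj', hx⟩ := (memS (x : B × C)).1 x.2
    rcases IsLocalRing.isUnit_or_isUnit_one_sub_self a with ha | ha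
    · exact Or.inl (hunit x a j j' hj hj' hx ha)
    · refine Or.inr (hunit (1 - x) (1 - a) (-j) (-j') (J.neg_mem hj) (J'.neg_mem hj') ?_ ha)
      have : ((1 - x : S) : B × C) = 1 - (x : B × C) := by push_cast; ring
      rw [this, hx]
      ext
      · simp [map_sub, map_one]; ring
      · simp [map_sub, map_one]; ring
  have htot : IsTotalRingOfQuotients S := by
    intro x
    obtain ⟨a, j, hj, j', hj', hx⟩ := (memS (x : B × C)).1 x.2
    rcases hA a with ha | ⟨b, hb0, hab⟩
    · exact Or.inl (hunit x a j j' hj hj' hx ha)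
    · right
      have hfab : f a * f b = 0 := by rw [← map_mul, hab, map_zero]
      have hgab : g a * g b = 0 := by rw [← map_mul, hab, map_zero]
      by_cases h1 : ∀ k ∈ J, f b * k = 0
      · by_cases h2 : ∀ k' ∈ J', g b * k' = 0
        · -- y = (f b, g b)
          have hyS : ((f b, g b) : B × C) ∈ S :=
            (memS _).2 ⟨b, 0, J.zero_mem, 0, J'.zero_mem, by simp⟩
          refine ⟨⟨(f b, g b), hyS⟩, ?_, ?_⟩
          · intro h
            apply hb0
            apply hf
            have := congrArg (fun s : S => (s : B × C).1) h
            simpa using this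
          · apply Subtype.ext
            show ((x : B × C) * (f b, g b)) = 0
            rw [hx, Prod.mk_mul_mk]
            have e1 : (f a + j) * f b = 0 := by
              have := h1 j hj
              linear_combination hfab + this
            have e2 : (g a + j') * g b = 0 := by
              have := h2 j' hj'
              linear_combination hgab + this
            rw [e1, e2]; rfl
        · push_neg at h2
          obtain ⟨k', hk', hbk'⟩ := h2
          have hyS : ((0, g b * k') : B × C) ∈ S :=
            (memS _).2 ⟨0, 0, J.zero_mem, g b * k', J'.mul_mem_left _ hk', by simp⟩
          refine ⟨⟨(0, g b * k'), hyS⟩, ?_, ?_⟩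
          · intro h
            apply hbk'
            have := congrArg (fun s : S => (s : B × C).2) h
            simpa using this
          · apply Subtype.ext
            show ((x : B × C) * (0, g b * k')) = 0
            rw [hx, Prod.mk_mul_mk]
            have e2 : (g a + j') * (g b * k') = 0 := by
              have h3 : j' * (g b * k') = 0 := hJ'mul _ _ hj' (J'.mul_mem_left _ hk')
              linear_combination k' * hgab + h3
            rw [mul_zero, e2]; rfl
      · push_neg at h1
        obtain ⟨k, hk, hbk⟩ := h1
        have hyS : ((f b * k, 0) : B × C) ∈ S :=
          (memS _).2 ⟨0, f b * k, J.mul_mem_left _ hk, 0, J'.zero_mem, by simp⟩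
        refine ⟨⟨(f b * k, 0), hyS⟩, ?_, ?_⟩
        · intro h
          apply hbk
          have := congrArg (fun s : S => (s : B × C).1) h
          simpa using this
        · apply Subtype.ext
          show ((x : B × C) * (f b * k, 0)) = 0
          rw [hx, Prod.mk_mul_mk]
          have e1 : (f a + j) * (f b * k) = 0 := by
            have h3 : j * (f b * k) = 0 := hJmul _ _ hj (J.mul_mem_left _ hk)
            linear_combination k * hfab + h3
          rw [e1, mul_zero]; rfl
  exact ⟨hlocal, htot, htot.isPruferRing⟩
end

section
/- Let (A, m) be a local ring and E a nonzero A/m-vector space. If A is not a field, then the trivial ring extension A ⋉ E is not an arithmetical ring. -/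
/-- A commutative ring is arithmetical if its lattice of ideals is distributive. -/
def IsArithmeticalRing (R : Type*) [CommRing R] : Prop :=
  ∀ I J K : Ideal R, I ⊓ (J ⊔ K) = (I ⊓ J) ⊔ (I ⊓ K)

/-- if `(A, m)` is local but not a field and `E` a nonzero `A/m`-vector
space, then `A ⋉ E` is not arithmetical. -/
theorem trivSqZeroExt_not_arithmetical
    (A E : Type*) [CommRing A] [IsLocalRing A]
    [AddCommGroup E] [Module A E] [Module Aᵐᵒᵖ E] [IsCentralScalar A E]
    [Nontrivial E]
    (hkill : ∀ a ∈ IsLocalRing.maximalIdeal A, ∀ e : E, a • e = 0)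
    (hA : ¬ IsField A) :
    ¬ IsArithmeticalRing (TrivSqZeroExt A E) := by
  intro h
  -- choose a nonzero element of the maximal ideal
  obtain ⟨a, ham, ha0⟩ : ∃ a ∈ IsLocalRing.maximalIdeal A, a ≠ 0 := by
    by_contra hc
    push_neg at hc
    apply hA
    rw [IsLocalRing.isField_iff_maximalIdeal_eq]
    exact (Submodule.eq_bot_iff _).2 hc
  obtain ⟨e, he0⟩ : ∃ e : E, e ≠ 0 := exists_ne 0
  set z : TrivSqZeroExt A E := TrivSqZeroExt.inl a + TrivSqZeroExt.inr e with hz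
  set I : Ideal (TrivSqZeroExt A E) := Ideal.span {z}
  set J : Ideal (TrivSqZeroExt A E) := Ideal.span {TrivSqZeroExt.inl a}
  set K : Ideal (TrivSqZeroExt A E) := Ideal.span {TrivSqZeroExt.inr e}
  have hzI : z ∈ I := Ideal.subset_span rfl
  have hzJK : z ∈ J ⊔ K :=
    add_mem (Ideal.mem_sup_left (Ideal.subset_span rfl))
      (Ideal.mem_sup_right (Ideal.subset_span rfl))
  have hzmem : z ∈ (I ⊓ J) ⊔ (I ⊓ K) := by
    rw [← h I J K]; exact ⟨hzI, hzJK⟩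
  obtain ⟨u, hu, v, hv, huv⟩ := Submodule.mem_sup.1 hzmem
  obtain ⟨huI, huJ⟩ := hu
  obtain ⟨hvI, hvK⟩ := hv
  obtain ⟨r, hr⟩ := Ideal.mem_span_singleton.1 huI
  obtain ⟨s, hs⟩ := Ideal.mem_span_singleton.1 huJ
  obtain ⟨t, ht⟩ := Ideal.mem_span_singleton.1 hvK
  -- compute components
  have hzfst : z.fst = a := by simp [hz]
  have hzsnd : z.snd = e := by simp [hz]
  have husnd : u.snd = r.fst • e := by
    rw [hr, TrivSqZeroExt.snd_mul, hzfst, hzsnd, hkill a ham, zero_add,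
      op_smul_eq_smul]
  have husnd0 : u.snd = 0 := by
    rw [hs, TrivSqZeroExt.snd_mul]
    simp [hkill a ham, op_smul_eq_smul]
  have hre : r.fst • e = 0 := by rw [← husnd, husnd0]
  -- r.fst must lie in the maximal ideal
  have hrm : r.fst ∈ IsLocalRing.maximalIdeal A := by
    by_contra hru
    have : IsUnit r.fst := by
      simpa [IsLocalRing.mem_maximalIdeal, mem_nonunits_iff, not_not] using hru
    obtain ⟨w, hw⟩ := this
    apply he0
    calc e = w⁻¹ • (w • e) := (inv_smul_smul w e).symm
      _ = w⁻¹ • ((r.fst : A) • e) := by rw [← hw]; rfl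
      _ = 0 := by rw [hre, smul_zero]
  have hufst : u.fst = a * r.fst := by rw [hr, TrivSqZeroExt.fst_mul, hzfst]
  have hvfst : v.fst = 0 := by
    rw [ht, TrivSqZeroExt.fst_mul, TrivSqZeroExt.fst_inr, zero_mul]
  have ha : a = a * r.fst := by
    have := congrArg TrivSqZeroExt.fst huv
    rw [TrivSqZeroExt.fst_add, hufst, hvfst, add_zero, hzfst] at this
    exact this.symm
  -- 1 - r.fst is a unit, so a = 0: contradiction
  have hunit : IsUnit (1 - r.fst) := by
    by_contra hn
    have : (1 : A) - r.fst ∈ IsLocalRing.maximalIdeal A :=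
      IsLocalRing.mem_maximalIdeal _ |>.2 hn
    have h1 : (1 : A) ∈ IsLocalRing.maximalIdeal A := by
      have := add_mem this hrm
      simpa using this
    exact (IsLocalRing.maximalIdeal.isMaximal A).ne_top ((Ideal.eq_top_iff_one _).2 h1)
  have hz0 : a * (1 - r.fst) = 0 := by linear_combination ha
  rw [mul_comm] at hz0
  exact ha0 ((hunit.mul_right_eq_zero).1 hz0)
end

section
/- Let (A₁, m₁) be a local ring with m₁² = 0 and E₁ a nonzero A₁/m₁-vector space. Then the trivial ring extension A := A₁ ⋉ E₁ is a Gaussian ring; moreover its maximal ideal m = m₁ ⋉ E₁ satisfies m² = 0. -/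
lemma coeff_mem_contentIdeal {R : Type*} [CommRing R] (p : Polynomial R) (n : ℕ) :
    p.coeff n ∈ contentIdeal p :=
  Ideal.subset_span ⟨n, rfl⟩

lemma contentIdeal_mul_le {R : Type*} [CommRing R] (p q : Polynomial R) :
    contentIdeal (p * q) ≤ contentIdeal p * contentIdeal q := by
  rw [contentIdeal, Ideal.span_le]
  rintro _ ⟨n, rfl⟩
  rw [Polynomial.coeff_mul]
  exact Ideal.sum_mem _ fun ij _ =>
    Ideal.mul_mem_mul (coeff_mem_contentIdeal p ij.1) (coeff_mem_contentIdeal q ij.2)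

lemma key_claim {R : Type*} [CommRing R] [IsLocalRing R]
    (hm : (IsLocalRing.maximalIdeal R) ^ 2 = ⊥)
    (p q : Polynomial R) (hq : ∀ j, ¬ IsUnit (q.coeff j))
    (k : ℕ) (hk : IsUnit (p.coeff k)) (hmin : ∀ i < k, ¬ IsUnit (p.coeff i)) :
    ∀ j, q.coeff j ∈ contentIdeal (p * q) := by
  intro j
  induction j using Nat.strong_induction_on with
  | _ j IH =>
    have hmem : ((k, j) : ℕ × ℕ) ∈ Finset.HasAntidiagonal.antidiagonal (k + j) := by
      simp [Finset.HasAntidiagonal.mem_antidiagonal]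
    have hsum := Finset.add_sum_erase _ (fun ij : ℕ × ℕ => p.coeff ij.1 * q.coeff ij.2) hmem
    have hrest : (∑ ij ∈ (Finset.HasAntidiagonal.antidiagonal (k + j)).erase (k, j),
        p.coeff ij.1 * q.coeff ij.2) ∈ contentIdeal (p * q) := by
      refine Ideal.sum_mem _ fun ij hij => ?_
      rw [Finset.mem_erase, Finset.HasAntidiagonal.mem_antidiagonal] at hij
      obtain ⟨hne, hadd⟩ := hij
      have h1 : ij.1 ≠ k := by
        rintro h
        apply hne
        have : ij.2 = j := by omega
        exact Prod.ext h this
      rcases lt_or_gt_of_ne h1 with hlt | hgt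
      · have h0 : p.coeff ij.1 * q.coeff ij.2 = 0 := by
          have : p.coeff ij.1 * q.coeff ij.2 ∈ (IsLocalRing.maximalIdeal R) ^ 2 := by
            rw [pow_two]
            exact Ideal.mul_mem_mul (IsLocalRing.mem_maximalIdeal _ |>.2 (hmin _ hlt))
              (IsLocalRing.mem_maximalIdeal _ |>.2 (hq _))
          rwa [hm, Ideal.mem_bot] at this
        rw [h0]; exact Ideal.zero_mem _
      · have h2 : ij.2 < j := by omega
        exact Ideal.mul_mem_left _ _ (IH _ h2)
    have hcoeff : (p * q).coeff (k + j) ∈ contentIdeal (p * q) :=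
      coeff_mem_contentIdeal _ _
    rw [Polynomial.coeff_mul] at hcoeff
    have : p.coeff k * q.coeff j ∈ contentIdeal (p * q) := by
      have := Ideal.sub_mem _ hcoeff hrest
      rwa [← hsum, add_sub_cancel_right] at this
    exact (Ideal.unit_mul_mem_iff_mem _ hk).1 this

lemma gaussian_of_local_sq_zero (R : Type*) [CommRing R] [IsLocalRing R]
    (hm : (IsLocalRing.maximalIdeal R) ^ 2 = ⊥) : IsGaussianRing R := by
  classical
  have half : ∀ p q : Polynomial R, (∀ j, ¬ IsUnit (q.coeff j)) →
      contentIdeal p * contentIdeal q ≤ contentIdeal (p * q) := by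
    intro p q hq
    by_cases hp : ∃ i, IsUnit (p.coeff i)
    · -- q ⊆ m, p has a unit coefficient at minimal index
      have hk : IsUnit (p.coeff (Nat.find hp)) := Nat.find_spec hp
      have hmin : ∀ i < Nat.find hp, ¬ IsUnit (p.coeff i) := fun i hi => Nat.find_min hp hi
      calc contentIdeal p * contentIdeal q ≤ contentIdeal q :=
          Ideal.mul_le.2 fun _ _ _ hy => Ideal.mul_mem_left _ _ hy
        _ ≤ contentIdeal (p * q) := by
          rw [contentIdeal, Ideal.span_le]
          rintro _ ⟨j, rfl⟩
          exact key_claim hm p q hq _ hk hmin j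
    · push_neg at hp
      have h1 : contentIdeal p ≤ IsLocalRing.maximalIdeal R := by
        rw [contentIdeal, Ideal.span_le]
        rintro _ ⟨i, rfl⟩
        exact (IsLocalRing.mem_maximalIdeal _).2 (hp i)
      have h2 : contentIdeal q ≤ IsLocalRing.maximalIdeal R := by
        rw [contentIdeal, Ideal.span_le]
        rintro _ ⟨j, rfl⟩
        exact (IsLocalRing.mem_maximalIdeal _).2 (hq j)
      calc contentIdeal p * contentIdeal q
          ≤ (IsLocalRing.maximalIdeal R) ^ 2 := by rw [pow_two]; exact Ideal.mul_mono h1 h2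
        _ = ⊥ := hm
        _ ≤ _ := bot_le
  intro p q
  refine le_antisymm (contentIdeal_mul_le p q) ?_
  by_cases hq : ∃ j, IsUnit (q.coeff j)
  · by_cases hp : ∃ i, IsUnit (p.coeff i)
    · -- both have unit coefficients: contentIdeal (p*q) = ⊤
      set k := Nat.find hp with hkdef
      set l := Nat.find hq with hldef
      have hk : IsUnit (p.coeff k) := Nat.find_spec hp
      have hl : IsUnit (q.coeff l) := Nat.find_spec hq
      have hrest : (∑ ij ∈ (Finset.HasAntidiagonal.antidiagonal (k + l)).erase (k, l),
          p.coeff ij.1 * q.coeff ij.2) ∈ IsLocalRing.maximalIdeal R := by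
        refine Ideal.sum_mem _ fun ij hij => ?_
        rw [Finset.mem_erase, Finset.HasAntidiagonal.mem_antidiagonal] at hij
        obtain ⟨hne, hadd⟩ := hij
        have h1 : ij.1 ≠ k := by
          rintro h; exact hne (Prod.ext h (by omega))
        rcases lt_or_gt_of_ne h1 with hlt | hgt
        · exact Ideal.mul_mem_right _ _
            ((IsLocalRing.mem_maximalIdeal _).2 (Nat.find_min hp hlt))
        · have h2 : ij.2 < l := by omega
          exact Ideal.mul_mem_left _ _
            ((IsLocalRing.mem_maximalIdeal _).2 (Nat.find_min hq h2))
      have hmem : ((k, l) : ℕ × ℕ) ∈ Finset.HasAntidiagonal.antidiagonal (k + l) := by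
        simp [Finset.HasAntidiagonal.mem_antidiagonal]
      have hsum := Finset.add_sum_erase _ (fun ij : ℕ × ℕ => p.coeff ij.1 * q.coeff ij.2) hmem
      have hunit : IsUnit ((p * q).coeff (k + l)) := by
        rw [Polynomial.coeff_mul, ← hsum]
        by_contra hcon
        have hmemm : p.coeff k * q.coeff l + _ ∈ IsLocalRing.maximalIdeal R :=
          (IsLocalRing.mem_maximalIdeal _).2 hcon
        have : p.coeff k * q.coeff l ∈ IsLocalRing.maximalIdeal R := by
          have := Ideal.sub_mem _ hmemm hrest
          rwa [add_sub_cancel_right] at this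
        exact (IsLocalRing.mem_maximalIdeal _).1 this (hk.mul hl)
      have : contentIdeal (p * q) = ⊤ :=
        Ideal.eq_top_of_isUnit_mem _ (coeff_mem_contentIdeal _ _) hunit
      rw [this]; exact le_top
    · push_neg at hp
      rw [mul_comm (contentIdeal p), mul_comm p]
      exact half q p hp
  · push_neg at hq
    exact half p q hq
/-- if `(A₁, m₁)` is local with `m₁² = 0` and `E₁` is a nonzero
`A₁/m₁`-vector space, then `A₁ ⋉ E₁` is Gaussian and its maximal ideal `m₁ ⋉ E₁`
squares to zero. -/
theorem trivSqZeroExt_gaussian_of_sq_zero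
    (A₁ E₁ : Type*) [CommRing A₁] [IsLocalRing A₁]
    [AddCommGroup E₁] [Module A₁ E₁] [Module A₁ᵐᵒᵖ E₁] [IsCentralScalar A₁ E₁]
    [Nontrivial E₁]
    (hkill : ∀ a ∈ IsLocalRing.maximalIdeal A₁, ∀ e : E₁, a • e = 0)
    (hm : (IsLocalRing.maximalIdeal A₁) ^ 2 = ⊥) :
    IsGaussianRing (TrivSqZeroExt A₁ E₁) ∧
      ∀ M : Ideal (TrivSqZeroExt A₁ E₁), M.IsMaximal →
        (M : Set (TrivSqZeroExt A₁ E₁)) =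
          {x | x.fst ∈ IsLocalRing.maximalIdeal A₁} ∧ M ^ 2 = ⊥ := by
  haveI : SMulCommClass A₁ A₁ᵐᵒᵖ E₁ :=
    ⟨fun a b e => by
      rw [← MulOpposite.op_unop b, op_smul_eq_smul, op_smul_eq_smul, smul_comm]⟩
  haveI hloc : IsLocalRing (TrivSqZeroExt A₁ E₁) := by
    refine IsLocalRing.of_isUnit_or_isUnit_one_sub_self fun x => ?_
    rcases IsLocalRing.isUnit_or_isUnit_one_sub_self x.fst with h | h
    · exact Or.inl (TrivSqZeroExt.isUnit_iff_isUnit_fst.2 h)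
    · refine Or.inr (TrivSqZeroExt.isUnit_iff_isUnit_fst.2 ?_)
      simpa using h
  -- the maximal ideal of the extension squares to zero
  have hmax : ∀ x : TrivSqZeroExt A₁ E₁,
      x ∈ IsLocalRing.maximalIdeal (TrivSqZeroExt A₁ E₁) ↔
        x.fst ∈ IsLocalRing.maximalIdeal A₁ := by
    intro x
    rw [IsLocalRing.mem_maximalIdeal, IsLocalRing.mem_maximalIdeal, mem_nonunits_iff,
      mem_nonunits_iff, TrivSqZeroExt.isUnit_iff_isUnit_fst]
  have hsq : (IsLocalRing.maximalIdeal (TrivSqZeroExt A₁ E₁)) ^ 2 = ⊥ := by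
    rw [pow_two]
    refine le_antisymm (Ideal.mul_le.2 fun x hx y hy => ?_) bot_le
    rw [Ideal.mem_bot]
    have hx1 : x.fst ∈ IsLocalRing.maximalIdeal A₁ := (hmax x).1 hx
    have hy1 : y.fst ∈ IsLocalRing.maximalIdeal A₁ := (hmax y).1 hy
    have hf : (x * y).fst = 0 := by
      rw [TrivSqZeroExt.fst_mul]
      have : x.fst * y.fst ∈ (IsLocalRing.maximalIdeal A₁) ^ 2 := by
        rw [pow_two]; exact Ideal.mul_mem_mul hx1 hy1
      rwa [hm, Ideal.mem_bot] at this
    have hs : (x * y).snd = 0 := by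
      rw [TrivSqZeroExt.snd_mul, op_smul_eq_smul, hkill _ hx1, hkill _ hy1, add_zero]
    exact TrivSqZeroExt.ext hf hs
  refine ⟨gaussian_of_local_sq_zero _ hsq, fun M hM => ?_⟩
  have hMeq : M = IsLocalRing.maximalIdeal (TrivSqZeroExt A₁ E₁) :=
    IsLocalRing.eq_maximalIdeal hM
  subst hMeq
  exact ⟨Set.ext fun x => hmax x, hsq⟩
end

section
/- Let (A₁, m₁) be a local ring and set A := A₁ ⋉ (A₁/m₁) (trivial extension). Then A is a local total ring of quotients: every element of A is either a unit or a zero-divisor. -/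
/-- if `(A₁, m₁)` is local, then `A₁ ⋉ (A₁/m₁)` is a local total ring of
quotients: every element is a unit or a zero-divisor. -/
theorem trivSqZeroExt_residue_totalRingOfQuotients
    (A₁ : Type*) [CommRing A₁] [IsLocalRing A₁] :
    IsLocalRing (TrivSqZeroExt A₁ (A₁ ⧸ IsLocalRing.maximalIdeal A₁)) ∧
      ∀ x : TrivSqZeroExt A₁ (A₁ ⧸ IsLocalRing.maximalIdeal A₁),
        IsUnit x ∨ ∃ y : TrivSqZeroExt A₁ (A₁ ⧸ IsLocalRing.maximalIdeal A₁),
          y ≠ 0 ∧ x * y = 0 := by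
  constructor
  · constructor
    intro a b hab
    rcases IsLocalRing.isUnit_or_isUnit_of_add_one
        (a := a.fst) (b := b.fst) (by rw [← TrivSqZeroExt.fst_add, hab]; simp) with h | h
    · exact Or.inl (TrivSqZeroExt.isUnit_iff_isUnit_fst.mpr h)
    · exact Or.inr (TrivSqZeroExt.isUnit_iff_isUnit_fst.mpr h)
  · intro x
    by_cases h : IsUnit x
    · exact Or.inl h
    · right
      refine ⟨TrivSqZeroExt.inr 1, fun hc => one_ne_zero (α := A₁ ⧸ IsLocalRing.maximalIdeal A₁) (by simpa using congrArg TrivSqZeroExt.snd hc), ?_⟩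
      rw [TrivSqZeroExt.isUnit_iff_isUnit_fst] at h
      have hm : x.fst ∈ IsLocalRing.maximalIdeal A₁ := h
      have hz : x.fst • (1 : A₁ ⧸ IsLocalRing.maximalIdeal A₁) = 0 := by
        have h1 := Submodule.Quotient.mk_smul (IsLocalRing.maximalIdeal A₁) x.fst (1 : A₁)
        rw [smul_eq_mul, mul_one] at h1
        rw [show (1 : A₁ ⧸ IsLocalRing.maximalIdeal A₁) = Submodule.Quotient.mk 1 from rfl,
          ← h1, Submodule.Quotient.mk_eq_zero]
        exact hm
      have : x * TrivSqZeroExt.inr 1 = TrivSqZeroExt.inr (x.fst • (1 : A₁ ⧸ IsLocalRing.maximalIdeal A₁)) := by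
        ext <;> simp [TrivSqZeroExt.snd_mul]
      rw [this, hz, TrivSqZeroExt.inr_zero]
end
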